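/- arXiv:2301.04296 — 3 statements merged into one kernel-verified Lean document; each statement's English description precedes it below -/
import Mathlib

section
/- Let M ∈ L_n(b_L, b_U) (as defined in the paper) and define the approximating matrix S(M) = (s_{ij}) by s_{ij} = δ_{ij}/m_{ii} + 1/m_{2n,2n} when i,j both lie in {1,...,n} or both lie in {n+1,...,2n-1}, and s_{ij} = -1/m_{2n,2n} otherwise, where m_{2n,i} = m_{ii} - ∑_{j≠i} m_{ij} and m_{2n,2n} = ∑_{i=1}^{2n-1} m_{2n,i}. If b_U/b_L = o(n), then for all sufficiently large n, ‖M^{-1} - S(M)‖_max ≤ c₁ b_U² / (b_L³ (n-1)²) for an absolute constant c₁ independent of M and n. -/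
open Finset Filter

/-- The matrix class `L_n(b_L, b_U)` of (A.1) (0-based indexing). -/
def memL (n : ℕ) (bL bU : ℝ) (M : Matrix (Fin (2 * n - 1)) (Fin (2 * n - 1)) ℝ) : Prop :=
  (∀ i j, M i j = M j i) ∧ (∀ i j, 0 ≤ M i j) ∧
  (∀ i j : Fin (2 * n - 1), (i : ℕ) < n → (j : ℕ) < n → i ≠ j → M i j = 0) ∧
  (∀ i j : Fin (2 * n - 1), n ≤ (i : ℕ) → n ≤ (j : ℕ) → i ≠ j → M i j = 0) ∧
  (∀ i j : Fin (2 * n - 1), (i : ℕ) < n - 1 → (j : ℕ) = n + (i : ℕ) → M i j = 0) ∧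
  (∀ i : Fin (2 * n - 1), (i : ℕ) < n →
    bL ≤ M i i - ∑ j ∈ univ.filter (fun j : Fin (2 * n - 1) => n ≤ (j : ℕ)), M i j ∧
    M i i - ∑ j ∈ univ.filter (fun j : Fin (2 * n - 1) => n ≤ (j : ℕ)), M i j ≤ bU) ∧
  (∀ i : Fin (2 * n - 1), n ≤ (i : ℕ) →
    M i i = ∑ k ∈ univ.filter (fun k : Fin (2 * n - 1) => (k : ℕ) < n), M k i) ∧
  (∀ i j : Fin (2 * n - 1), (i : ℕ) < n → n ≤ (j : ℕ) → (j : ℕ) ≠ n + (i : ℕ) →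
    bL ≤ M i j ∧ M i j ≤ bU)

/-- The explicit approximate inverse `S(M)` of Yan, Leng and Zhu (2016). -/
noncomputable def approxS (n : ℕ) (M : Matrix (Fin (2 * n - 1)) (Fin (2 * n - 1)) ℝ) :
    Matrix (Fin (2 * n - 1)) (Fin (2 * n - 1)) ℝ :=
  fun i j =>
    let m2n : Fin (2 * n - 1) → ℝ := fun k => M k k - ∑ l ∈ univ.filter (· ≠ k), M k l
    let m22 : ℝ := ∑ k, m2n k
    if ((i : ℕ) < n ∧ (j : ℕ) < n) ∨ (n ≤ (i : ℕ) ∧ n ≤ (j : ℕ)) then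
      (if i = j then 1 / M i i else 0) + 1 / m22
    else -(1 / m22)

set_option linter.unusedSectionVars false
set_option linter.unusedVariables false
set_option maxHeartbeats 1600000

namespace YLZ

variable {n : ℕ}

def Fa (n : ℕ) : Finset (Fin (2*n-1)) := univ.filter (fun i => (i:ℕ) < n)
def Fb (n : ℕ) : Finset (Fin (2*n-1)) := univ.filter (fun i => n ≤ (i:ℕ))

lemma mem_Fa {i : Fin (2*n-1)} : i ∈ Fa n ↔ (i:ℕ) < n := by simp [Fa]
lemma mem_Fb {i : Fin (2*n-1)} : i ∈ Fb n ↔ n ≤ (i:ℕ) := by simp [Fb]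

lemma sum_split (f : Fin (2*n-1) → ℝ) : ∑ i, f i = ∑ i ∈ Fa n, f i + ∑ i ∈ Fb n, f i := by
  rw [← Finset.sum_filter_add_sum_filter_not univ (fun i : Fin (2*n-1) => (i:ℕ) < n) f]
  congr 1
  apply Finset.sum_congr _ (fun _ _ => rfl)
  ext i; simp [Fb, not_lt]

lemma card_Fa (hn : 1 ≤ n) : (Fa n).card = n := by
  apply Finset.card_eq_of_bijective (fun i h => (⟨i, by omega⟩ : Fin (2*n-1)))
  · intro a ha
    rw [mem_Fa] at ha
    exact ⟨a, ha, Fin.ext rfl⟩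
  · intro i h; rw [mem_Fa]; exact h
  · intro i j hi hj hij
    simpa using congrArg Fin.val hij

lemma card_Fb (hn : 1 ≤ n) : (Fb n).card = n - 1 := by
  apply Finset.card_eq_of_bijective (fun i h => (⟨n + i, by omega⟩ : Fin (2*n-1)))
  · intro a ha
    rw [mem_Fb] at ha
    exact ⟨(a:ℕ) - n, by omega, Fin.ext (by simp; omega)⟩
  · intro i h; rw [mem_Fb]; simp
  · intro i j hi hj hij
    have := congrArg Fin.val hij
    simp at this; omega

lemma card_val_eq (c : ℕ) : (univ.filter (fun m : Fin (2*n-1) => (m:ℕ) = c)).card ≤ 1 := by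
  apply Finset.card_le_one.2
  intro a ha b hb
  simp at ha hb
  exact Fin.ext (by omega)

noncomputable def rr (n : ℕ) (M : Matrix (Fin (2*n-1)) (Fin (2*n-1)) ℝ) (i : Fin (2*n-1)) : ℝ :=
  ∑ m ∈ Fb n, M i m

noncomputable def aa (n : ℕ) (M : Matrix (Fin (2*n-1)) (Fin (2*n-1)) ℝ) (i : Fin (2*n-1)) : ℝ :=
  M i i - rr n M i

noncomputable def ss (n : ℕ) (M : Matrix (Fin (2*n-1)) (Fin (2*n-1)) ℝ) : ℝ :=
  ∑ i ∈ Fa n, aa n M i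


def sg (n : ℕ) (i : Fin (2*n-1)) : ℝ := if (i:ℕ) < n then 1 else -1

noncomputable def Mt (n : ℕ) (M : Matrix (Fin (2*n-1)) (Fin (2*n-1)) ℝ) :
    Matrix (Fin (2*n-1)) (Fin (2*n-1)) ℝ :=
  Matrix.of fun i k => sg n i * sg n k * M i k

lemma sg_a {i : Fin (2*n-1)} (hi : (i:ℕ) < n) : sg n i = 1 := by simp [sg, hi]
lemma sg_b {i : Fin (2*n-1)} (hi : n ≤ (i:ℕ)) : sg n i = -1 := by
  simp [sg, not_lt.2 hi]

section MtM
variable {M : Matrix (Fin (2*n-1)) (Fin (2*n-1)) ℝ}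
lemma Mt_aa {i k : Fin (2*n-1)} (hi : (i:ℕ) < n) (hk : (k:ℕ) < n) :
    Mt n M i k = M i k := by simp [Mt, sg_a hi, sg_a hk]
lemma Mt_ab {i k : Fin (2*n-1)} (hi : (i:ℕ) < n) (hk : n ≤ (k:ℕ)) :
    Mt n M i k = -M i k := by simp [Mt, sg_a hi, sg_b hk]
lemma Mt_ba {i k : Fin (2*n-1)} (hi : n ≤ (i:ℕ)) (hk : (k:ℕ) < n) :
    Mt n M i k = -M i k := by simp [Mt, sg_b hi, sg_a hk]
lemma Mt_bb {i k : Fin (2*n-1)} (hi : n ≤ (i:ℕ)) (hk : n ≤ (k:ℕ)) :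
    Mt n M i k = M i k := by simp [Mt, sg_b hi, sg_b hk]
end MtM

variable {bL bU : ℝ} {M : Matrix (Fin (2*n-1)) (Fin (2*n-1)) ℝ}

section basic
variable (hn : 6 ≤ n) (hbL : 0 < bL) (hbLU : bL ≤ bU) (hM : memL n bL bU M)
include hn hbL hbLU hM

lemma pair_zero {i m : Fin (2*n-1)} (hi : (i:ℕ) < n) (hm : (m:ℕ) = n + (i:ℕ)) :
    M i m = 0 := by
  have h2 : (m:ℕ) < 2*n-1 := m.isLt
  exact hM.2.2.2.2.1 i m (by omega) hm

lemma cross_le {i m : Fin (2*n-1)} (hi : (i:ℕ) < n) (hm : n ≤ (m:ℕ)) : M i m ≤ bU := by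
  by_cases h : (m:ℕ) = n + (i:ℕ)
  · rw [pair_zero hn hbL hbLU hM hi h]; linarith
  · exact (hM.2.2.2.2.2.2.2 i m hi hm h).2

lemma cross_ge {i m : Fin (2*n-1)} (hi : (i:ℕ) < n) (hm : n ≤ (m:ℕ))
    (hne : (m:ℕ) ≠ n + (i:ℕ)) : bL ≤ M i m :=
  (hM.2.2.2.2.2.2.2 i m hi hm hne).1

lemma rr_le {i : Fin (2*n-1)} (hi : (i:ℕ) < n) : rr n M i ≤ ((n:ℝ)-1) * bU := by
  have h1 : rr n M i ≤ ∑ _m ∈ Fb n, bU :=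
    Finset.sum_le_sum (fun m hm => cross_le hn hbL hbLU hM hi (mem_Fb.1 hm))
  rw [Finset.sum_const, card_Fb (by omega), nsmul_eq_mul] at h1
  calc rr n M i ≤ ((n-1:ℕ):ℝ) * bU := h1
    _ = ((n:ℝ)-1) * bU := by rw [Nat.cast_sub (by omega)]; norm_num

lemma rr_ge {i : Fin (2*n-1)} (hi : (i:ℕ) < n) : ((n:ℝ)-2) * bL ≤ rr n M i := by
  classical
  set t := (Fb n).filter (fun m : Fin (2*n-1) => (m:ℕ) ≠ n + (i:ℕ)) with ht
  have hsub : t ⊆ Fb n := Finset.filter_subset _ _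
  have h1 : ∑ m ∈ t, M i m ≤ rr n M i := by
    apply Finset.sum_le_sum_of_subset_of_nonneg hsub
    intro m _ _; exact hM.2.1 i m
  have h2 : ∀ m ∈ t, bL ≤ M i m := by
    intro m hm
    simp only [ht, Finset.mem_filter] at hm
    exact cross_ge hn hbL hbLU hM hi (mem_Fb.1 hm.1) hm.2
  have h3 : (t.card : ℝ) * bL ≤ ∑ m ∈ t, M i m := by
    calc (t.card : ℝ) * bL = ∑ _m ∈ t, bL := by rw [Finset.sum_const, nsmul_eq_mul]
      _ ≤ ∑ m ∈ t, M i m := Finset.sum_le_sum h2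
  have hcard : n - 2 ≤ t.card := by
    have hsplit : t.card + ((Fb n).filter (fun m : Fin (2*n-1) => ¬ (m:ℕ) ≠ n + (i:ℕ))).card
        = (Fb n).card := by
      rw [ht]
      exact Finset.card_filter_add_card_filter_not
        (p := fun m : Fin (2*n-1) => (m:ℕ) ≠ n + (i:ℕ))
    have hle : ((Fb n).filter (fun m : Fin (2*n-1) => ¬ (m:ℕ) ≠ n + (i:ℕ))).card ≤ 1 := by
      refine le_trans (Finset.card_le_card ?_) (card_val_eq (n + (i:ℕ)))
      intro x hx
      simp only [Finset.mem_filter, not_not] at hx ⊢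
      exact ⟨Finset.mem_univ x, hx.2⟩
    have := card_Fb (n := n) (by omega)
    omega
  have hcast : ((n:ℝ)-2) ≤ (t.card : ℝ) := by
    have h4 : n ≤ t.card + 2 := by omega
    have h5 : (n:ℝ) ≤ (t.card : ℝ) + 2 := by exact_mod_cast h4
    linarith
  calc ((n:ℝ)-2) * bL ≤ (t.card : ℝ) * bL := by
        apply mul_le_mul_of_nonneg_right hcast (le_of_lt hbL)
    _ ≤ ∑ m ∈ t, M i m := h3
    _ ≤ rr n M i := h1

lemma aa_mem {i : Fin (2*n-1)} (hi : (i:ℕ) < n) : bL ≤ aa n M i ∧ aa n M i ≤ bU :=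
  hM.2.2.2.2.2.1 i hi

lemma diag_eq_a {i : Fin (2*n-1)} (hi : (i:ℕ) < n) : M i i = aa n M i + rr n M i := by
  simp [aa]

lemma diag_ge {i : Fin (2*n-1)} : ((n:ℝ)-1) * bL ≤ M i i := by
  rcases lt_or_ge ((i:ℕ)) n with hi | hi
  · have h1 := (aa_mem hn hbL hbLU hM hi).1
    have h2 := rr_ge hn hbL hbLU hM hi
    rw [diag_eq_a hn hbL hbLU hM hi]; linarith
  · -- i ∈ Fb : M i i = ∑_{k ∈ Fa} M k i ≥ (n-1) bL
    have hcol : M i i = ∑ k ∈ Fa n, M k i := hM.2.2.2.2.2.2.1 i hi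
    set t := (Fa n).filter (fun k : Fin (2*n-1) => (i:ℕ) ≠ n + (k:ℕ)) with ht
    have h1 : ∑ k ∈ t, M k i ≤ ∑ k ∈ Fa n, M k i := by
      apply Finset.sum_le_sum_of_subset_of_nonneg (Finset.filter_subset _ _)
      intro m _ _; exact hM.2.1 m i
    have h2 : ∀ k ∈ t, bL ≤ M k i := by
      intro k hk
      simp only [ht, Finset.mem_filter] at hk
      exact cross_ge hn hbL hbLU hM (mem_Fa.1 hk.1) hi hk.2
    have hcard : n - 1 ≤ t.card := by
      have hsplit : t.card + ((Fa n).filter (fun k : Fin (2*n-1) => ¬ (i:ℕ) ≠ n + (k:ℕ))).card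
          = (Fa n).card := by
        rw [ht]
        exact Finset.card_filter_add_card_filter_not
          (p := fun k : Fin (2*n-1) => (i:ℕ) ≠ n + (k:ℕ))
      have hle : ((Fa n).filter (fun k : Fin (2*n-1) => ¬ (i:ℕ) ≠ n + (k:ℕ))).card ≤ 1 := by
        apply Finset.card_le_one.2
        intro a ha b hb
        simp only [Finset.mem_filter, not_not] at ha hb
        exact Fin.ext (by omega)
      have := card_Fa (n := n) (by omega)
      omega
    have hcast : ((n:ℝ)-1) ≤ (t.card : ℝ) := by
      have h4 : n ≤ t.card + 1 := by omega
      have h5 : (n:ℝ) ≤ (t.card : ℝ) + 1 := by exact_mod_cast h4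
      linarith
    calc ((n:ℝ)-1) * bL ≤ (t.card:ℝ) * bL := mul_le_mul_of_nonneg_right hcast (le_of_lt hbL)
      _ = ∑ _k ∈ t, bL := by rw [Finset.sum_const, nsmul_eq_mul]
      _ ≤ ∑ k ∈ t, M k i := Finset.sum_le_sum h2
      _ ≤ ∑ k ∈ Fa n, M k i := h1
      _ = M i i := hcol.symm

lemma diag_pos {i : Fin (2*n-1)} : 0 < M i i := by
  have := diag_ge hn hbL hbLU hM (i := i)
  have h6 : (6:ℝ) ≤ (n:ℝ) := by exact_mod_cast hn
  nlinarith

lemma ss_ge : (n:ℝ) * bL ≤ ss n M := by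
  have h : ∀ i ∈ Fa n, bL ≤ aa n M i := fun i hi => (aa_mem hn hbL hbLU hM (mem_Fa.1 hi)).1
  calc (n:ℝ) * bL = ((Fa n).card : ℝ) * bL := by rw [card_Fa (by omega)]
    _ = ∑ _i ∈ Fa n, bL := by rw [Finset.sum_const, nsmul_eq_mul]
    _ ≤ ss n M := Finset.sum_le_sum h

lemma ss_pos : 0 < ss n M := by
  have := ss_ge hn hbL hbLU hM
  have h6 : (6:ℝ) ≤ (n:ℝ) := by exact_mod_cast hn
  nlinarith

lemma m22_eq : (∑ k, (M k k - ∑ l ∈ univ.filter (· ≠ k), M k l)) = ss n M := by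
  rw [sum_split]
  have hFa : ∀ k ∈ Fa n, (M k k - ∑ l ∈ univ.filter (· ≠ k), M k l) = aa n M k := by
    intro k hk
    rw [mem_Fa] at hk
    have : ∑ l ∈ univ.filter (· ≠ k), M k l = rr n M k := by
      rw [rr]
      apply (Finset.sum_subset ?_ ?_).symm
      · intro m hm
        rw [mem_Fb] at hm
        simp only [Finset.mem_filter]
        exact ⟨Finset.mem_univ m, by intro h; rw [h] at hm; omega⟩
      · intro l hl hlb
        simp only [Finset.mem_filter] at hl
        rw [mem_Fb] at hlb
        exact hM.2.2.1 k l hk (by omega) (Ne.symm hl.2)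
    rw [this, aa]
  have hFb : ∀ k ∈ Fb n, (M k k - ∑ l ∈ univ.filter (· ≠ k), M k l) = 0 := by
    intro k hk
    rw [mem_Fb] at hk
    have h1 : ∑ l ∈ univ.filter (· ≠ k), M k l = ∑ l ∈ Fa n, M k l := by
      apply (Finset.sum_subset ?_ ?_).symm
      · intro m hm
        rw [mem_Fa] at hm
        simp only [Finset.mem_filter]
        exact ⟨Finset.mem_univ m, by intro h; rw [h] at hm; omega⟩
      · intro l hl hlb
        simp only [Finset.mem_filter] at hl
        rw [mem_Fa] at hlb
        exact hM.2.2.2.1 k l hk (by omega) (Ne.symm hl.2)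
    have h2 : ∑ l ∈ Fa n, M k l = ∑ l ∈ Fa n, M l k :=
      Finset.sum_congr rfl (fun l _ => hM.1 k l)
    have hcol : M k k = ∑ l ∈ Fa n, M l k := hM.2.2.2.2.2.2.1 k hk
    rw [h1, h2, ← hcol]
    ring
  rw [Finset.sum_congr rfl hFa, Finset.sum_congr rfl hFb, ss]
  simp


lemma qf_eq (x : Fin (2*n-1) → ℝ) :
    dotProduct x ((Mt n M).mulVec x)
      = (∑ i ∈ Fa n, aa n M i * x i ^ 2)
        + ∑ i ∈ Fa n, ∑ m ∈ Fb n, M i m * (x i - x m) ^ 2 := by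
  classical
  have e1 : dotProduct x ((Mt n M).mulVec x)
      = ∑ i, ∑ k, x i * Mt n M i k * x k := by
    simp only [dotProduct, Matrix.mulVec, Finset.mul_sum]
    exact Finset.sum_congr rfl fun i _ => Finset.sum_congr rfl fun k _ => by ring
  -- split into blocks
  have e2 : ∑ i, ∑ k, x i * Mt n M i k * x k
      = (∑ i ∈ Fa n, ∑ k ∈ Fa n, x i * Mt n M i k * x k)
        + (∑ i ∈ Fa n, ∑ k ∈ Fb n, x i * Mt n M i k * x k)
        + ((∑ i ∈ Fb n, ∑ k ∈ Fa n, x i * Mt n M i k * x k)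
        + (∑ i ∈ Fb n, ∑ k ∈ Fb n, x i * Mt n M i k * x k)) := by
    rw [sum_split (fun i => ∑ k, x i * Mt n M i k * x k)]
    congr 1
    · rw [← Finset.sum_add_distrib]
      exact Finset.sum_congr rfl fun i _ => sum_split _
    · rw [← Finset.sum_add_distrib]
      exact Finset.sum_congr rfl fun i _ => sum_split _
  have eA : ∑ i ∈ Fa n, ∑ k ∈ Fa n, x i * Mt n M i k * x k
      = ∑ i ∈ Fa n, M i i * x i ^ 2 := by
    apply Finset.sum_congr rfl
    intro i hi
    rw [Finset.sum_eq_single_of_mem i hi]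
    · rw [Mt_aa (mem_Fa.1 hi) (mem_Fa.1 hi)]; ring
    · intro k hk hne
      rw [Mt_aa (mem_Fa.1 hi) (mem_Fa.1 hk), hM.2.2.1 i k (mem_Fa.1 hi) (mem_Fa.1 hk) (Ne.symm hne)]
      ring
  have eD : ∑ i ∈ Fb n, ∑ k ∈ Fb n, x i * Mt n M i k * x k
      = ∑ m ∈ Fb n, M m m * x m ^ 2 := by
    apply Finset.sum_congr rfl
    intro i hi
    rw [Finset.sum_eq_single_of_mem i hi]
    · rw [Mt_bb (mem_Fb.1 hi) (mem_Fb.1 hi)]; ring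
    · intro k hk hne
      rw [Mt_bb (mem_Fb.1 hi) (mem_Fb.1 hk), hM.2.2.2.1 i k (mem_Fb.1 hi) (mem_Fb.1 hk) (Ne.symm hne)]
      ring
  have eB : ∑ i ∈ Fa n, ∑ k ∈ Fb n, x i * Mt n M i k * x k
      = -∑ i ∈ Fa n, ∑ m ∈ Fb n, M i m * (x i * x m) := by
    rw [← Finset.sum_neg_distrib]
    apply Finset.sum_congr rfl
    intro i hi
    rw [← Finset.sum_neg_distrib]
    apply Finset.sum_congr rfl
    intro m hm
    rw [Mt_ab (mem_Fa.1 hi) (mem_Fb.1 hm)]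
    ring
  have eC : ∑ i ∈ Fb n, ∑ k ∈ Fa n, x i * Mt n M i k * x k
      = -∑ i ∈ Fa n, ∑ m ∈ Fb n, M i m * (x i * x m) := by
    rw [Finset.sum_comm, ← Finset.sum_neg_distrib]
    apply Finset.sum_congr rfl
    intro i hi
    rw [← Finset.sum_neg_distrib]
    apply Finset.sum_congr rfl
    intro m hm
    rw [Mt_ba (mem_Fb.1 hm) (mem_Fa.1 hi), hM.1 m i]
    ring
  -- RHS expansion
  have eR : ∑ i ∈ Fa n, ∑ m ∈ Fb n, M i m * (x i - x m) ^ 2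
      = (∑ i ∈ Fa n, rr n M i * x i ^ 2) + (∑ m ∈ Fb n, M m m * x m ^ 2)
        - 2 * ∑ i ∈ Fa n, ∑ m ∈ Fb n, M i m * (x i * x m) := by
    have expand : ∀ i ∈ Fa n, ∀ m ∈ Fb n,
        M i m * (x i - x m) ^ 2
          = M i m * x i ^ 2 + M i m * x m ^ 2 - 2 * (M i m * (x i * x m)) := by
      intro i _ m _; ring
    calc ∑ i ∈ Fa n, ∑ m ∈ Fb n, M i m * (x i - x m) ^ 2
        = ∑ i ∈ Fa n, ∑ m ∈ Fb n,
            (M i m * x i ^ 2 + M i m * x m ^ 2 - 2 * (M i m * (x i * x m))) :=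
          Finset.sum_congr rfl fun i hi => Finset.sum_congr rfl fun m hm => expand i hi m hm
      _ = (∑ i ∈ Fa n, ∑ m ∈ Fb n, M i m * x i ^ 2)
            + (∑ i ∈ Fa n, ∑ m ∈ Fb n, M i m * x m ^ 2)
            - 2 * ∑ i ∈ Fa n, ∑ m ∈ Fb n, M i m * (x i * x m) := by
          simp only [Finset.sum_sub_distrib, Finset.sum_add_distrib, Finset.mul_sum]
      _ = (∑ i ∈ Fa n, rr n M i * x i ^ 2) + (∑ m ∈ Fb n, M m m * x m ^ 2)
            - 2 * ∑ i ∈ Fa n, ∑ m ∈ Fb n, M i m * (x i * x m) := by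
          have p1 : ∑ i ∈ Fa n, ∑ m ∈ Fb n, M i m * x i ^ 2
              = ∑ i ∈ Fa n, rr n M i * x i ^ 2 := by
            apply Finset.sum_congr rfl
            intro i _
            rw [rr, Finset.sum_mul]
          have p2 : ∑ i ∈ Fa n, ∑ m ∈ Fb n, M i m * x m ^ 2
              = ∑ m ∈ Fb n, M m m * x m ^ 2 := by
            rw [Finset.sum_comm]
            apply Finset.sum_congr rfl
            intro m hm
            have hd : M m m = ∑ k ∈ Fa n, M k m := hM.2.2.2.2.2.2.1 m (mem_Fb.1 hm)
            rw [hd, Finset.sum_mul]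
          rw [p1, p2]
  have eaa : ∀ i ∈ Fa n, M i i * x i ^ 2 = aa n M i * x i ^ 2 + rr n M i * x i ^ 2 := by
    intro i _; rw [aa]; ring
  rw [e1, e2, eA, eD, eB, eC, eR, Finset.sum_congr rfl eaa, Finset.sum_add_distrib]
  ring
omit hn hbL hbLU hM in
lemma card_le_one_of_det {P : Fin (2*n-1) → Prop} [DecidablePred P]
    (s : Finset (Fin (2*n-1))) (h : ∀ a b, P a → P b → a = b) :
    (s.filter P).card ≤ 1 := by
  apply Finset.card_le_one.2
  intro a ha b hb
  simp only [Finset.mem_filter] at ha hb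
  exact h a b ha.2 hb.2

omit hn hbL hbLU hM in
lemma card_filter_ge {P : Fin (2*n-1) → Prop} [DecidablePred P]
    (s : Finset (Fin (2*n-1))) {k : ℕ}
    (h : (s.filter (fun a => ¬ P a)).card ≤ k) : s.card - k ≤ (s.filter P).card := by
  have := Finset.card_filter_add_card_filter_not (s := s) (p := P)
  omega

omit hbL hbLU hM in
lemma card_Fb_ne (c : ℕ) : n - 2 ≤ ((Fb n).filter (fun m : Fin (2*n-1) => (m:ℕ) ≠ c)).card := by
  have h1 : ((Fb n).filter (fun m : Fin (2*n-1) => ¬ (m:ℕ) ≠ c)).card ≤ 1 := by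
    apply card_le_one_of_det
    intro a b ha hb
    push_neg at ha hb
    exact Fin.ext (by omega)
  have h2 := card_filter_ge (Fb n) h1
  have h3 := card_Fb (n := n) (by omega)
  omega

omit hbL hbLU hM in
lemma card_Fa_nepair (c : ℕ) :
    n - 1 ≤ ((Fa n).filter (fun k : Fin (2*n-1) => c ≠ n + (k:ℕ))).card := by
  have h1 : ((Fa n).filter (fun k : Fin (2*n-1) => ¬ c ≠ n + (k:ℕ))).card ≤ 1 := by
    apply card_le_one_of_det
    intro a b ha hb
    push_neg at ha hb
    exact Fin.ext (by omega)
  have h2 := card_filter_ge (Fa n) h1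
  have h3 := card_Fa (n := n) (by omega)
  omega

omit hbL hbLU hM in
lemma card_Fb_ne2 (c d : ℕ) :
    n - 3 ≤ ((Fb n).filter (fun m : Fin (2*n-1) => (m:ℕ) ≠ c ∧ (m:ℕ) ≠ d)).card := by
  have h1 : ((Fb n).filter (fun m : Fin (2*n-1) => ¬ ((m:ℕ) ≠ c ∧ (m:ℕ) ≠ d))).card ≤ 2 := by
    have hsub : ((Fb n).filter (fun m : Fin (2*n-1) => ¬ ((m:ℕ) ≠ c ∧ (m:ℕ) ≠ d)))
        ⊆ ((Fb n).filter (fun m : Fin (2*n-1) => (m:ℕ) = c))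
          ∪ ((Fb n).filter (fun m : Fin (2*n-1) => (m:ℕ) = d)) := by
      intro x hx
      simp only [Finset.mem_filter, Finset.mem_union, not_and_or, not_not] at hx ⊢
      tauto
    calc _ ≤ _ := Finset.card_le_card hsub
      _ ≤ _ := Finset.card_union_le _ _
      _ ≤ 2 := by
        have e1 : ((Fb n).filter (fun m : Fin (2*n-1) => (m:ℕ) = c)).card ≤ 1 :=
          card_le_one_of_det _ (fun a b ha hb => Fin.ext (by omega))
        have e2 : ((Fb n).filter (fun m : Fin (2*n-1) => (m:ℕ) = d)).card ≤ 1 :=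
          card_le_one_of_det _ (fun a b ha hb => Fin.ext (by omega))
        omega
  have h2 := card_filter_ge (Fb n) h1
  have h3 := card_Fb (n := n) (by omega)
  omega

omit hbL hbLU hM in
lemma card_Fa_nepair2 (c d : ℕ) :
    n - 2 ≤ ((Fa n).filter (fun k : Fin (2*n-1) => c ≠ n + (k:ℕ) ∧ d ≠ n + (k:ℕ))).card := by
  have h1 : ((Fa n).filter (fun k : Fin (2*n-1) => ¬ (c ≠ n + (k:ℕ) ∧ d ≠ n + (k:ℕ)))).card ≤ 2 := by
    have hsub : ((Fa n).filter (fun k : Fin (2*n-1) => ¬ (c ≠ n + (k:ℕ) ∧ d ≠ n + (k:ℕ))))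
        ⊆ ((Fa n).filter (fun k : Fin (2*n-1) => c = n + (k:ℕ)))
          ∪ ((Fa n).filter (fun k : Fin (2*n-1) => d = n + (k:ℕ))) := by
      intro x hx
      simp only [Finset.mem_filter, Finset.mem_union, not_and_or, not_not] at hx ⊢
      tauto
    calc _ ≤ _ := Finset.card_le_card hsub
      _ ≤ _ := Finset.card_union_le _ _
      _ ≤ 2 := by
        have e1 : ((Fa n).filter (fun k : Fin (2*n-1) => c = n + (k:ℕ))).card ≤ 1 :=
          card_le_one_of_det _ (fun a b ha hb => Fin.ext (by omega))
        have e2 : ((Fa n).filter (fun k : Fin (2*n-1) => d = n + (k:ℕ))).card ≤ 1 :=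
          card_le_one_of_det _ (fun a b ha hb => Fin.ext (by omega))
        omega
  have h2 := card_filter_ge (Fa n) h1
  have h3 := card_Fa (n := n) (by omega)
  omega

lemma qf_split (x : Fin (2*n-1) → ℝ) :
    dotProduct x ((Mt n M).mulVec x)
      = (∑ i ∈ Fa n, aa n M i * x i ^ 2)
        + ∑ i ∈ Fa n, ∑ m ∈ Fb n, M i m * (x i - x m) ^ 2 :=
  qf_eq hn hbL hbLU hM x

lemma Q1_nonneg (x : Fin (2*n-1) → ℝ) : 0 ≤ ∑ i ∈ Fa n, aa n M i * x i ^ 2 := by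
  apply Finset.sum_nonneg
  intro i hi
  have := (aa_mem hn hbL hbLU hM (mem_Fa.1 hi)).1
  exact mul_nonneg (by linarith) (sq_nonneg _)

lemma Q2_nonneg (x : Fin (2*n-1) → ℝ) :
    0 ≤ ∑ i ∈ Fa n, ∑ m ∈ Fb n, M i m * (x i - x m) ^ 2 := by
  apply Finset.sum_nonneg
  intro i _
  apply Finset.sum_nonneg
  intro m _
  have := hM.2.1 i m
  positivity

lemma qf_nonneg (x : Fin (2*n-1) → ℝ) : 0 ≤ dotProduct x ((Mt n M).mulVec x) := by
  rw [qf_split hn hbL hbLU hM]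
  have := Q1_nonneg hn hbL hbLU hM x
  have := Q2_nonneg hn hbL hbLU hM x
  linarith

lemma master_b (x : Fin (2*n-1) → ℝ) {m : Fin (2*n-1)} (hm : n ≤ (m:ℕ)) :
    ((n:ℝ)-1) * bL * x m ^ 2 ≤ 2 * dotProduct x ((Mt n M).mulVec x) := by
  classical
  set Q1 := ∑ i ∈ Fa n, aa n M i * x i ^ 2 with hQ1
  set Q2 := ∑ i ∈ Fa n, ∑ m' ∈ Fb n, M i m' * (x i - x m') ^ 2 with hQ2
  set t := (Fa n).filter (fun k : Fin (2*n-1) => (m:ℕ) ≠ n + (k:ℕ)) with ht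
  have hsubt : t ⊆ Fa n := Finset.filter_subset _ _
  have hper : ∀ k ∈ t, bL * x m ^ 2
      ≤ 2 * (M k m * (x k - x m) ^ 2) + 2 * (aa n M k * x k ^ 2) := by
    intro k hk
    simp only [ht, Finset.mem_filter] at hk
    have hkM : bL ≤ M k m := cross_ge hn hbL hbLU hM (mem_Fa.1 hk.1) hm hk.2
    have hka : bL ≤ aa n M k := (aa_mem hn hbL hbLU hM (mem_Fa.1 hk.1)).1
    have e1 : bL * (x k - x m) ^ 2 ≤ M k m * (x k - x m) ^ 2 :=
      mul_le_mul_of_nonneg_right hkM (sq_nonneg _)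
    have e2 : bL * x k ^ 2 ≤ aa n M k * x k ^ 2 :=
      mul_le_mul_of_nonneg_right hka (sq_nonneg _)
    nlinarith [sq_nonneg (2 * x k - x m)]
  have hsum : (t.card : ℝ) * (bL * x m ^ 2)
      ≤ 2 * (∑ k ∈ t, M k m * (x k - x m) ^ 2) + 2 * (∑ k ∈ t, aa n M k * x k ^ 2) := by
    calc (t.card : ℝ) * (bL * x m ^ 2) = ∑ _k ∈ t, bL * x m ^ 2 := by
          rw [Finset.sum_const, nsmul_eq_mul]
      _ ≤ ∑ k ∈ t, (2 * (M k m * (x k - x m) ^ 2) + 2 * (aa n M k * x k ^ 2)) :=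
          Finset.sum_le_sum hper
      _ = _ := by rw [Finset.sum_add_distrib, ← Finset.mul_sum, ← Finset.mul_sum]
  have hS1 : ∑ k ∈ t, aa n M k * x k ^ 2 ≤ Q1 := by
    apply Finset.sum_le_sum_of_subset_of_nonneg hsubt
    intro k hk _
    have := (aa_mem hn hbL hbLU hM (mem_Fa.1 hk)).1
    exact mul_nonneg (by linarith) (sq_nonneg _)
  have hS2 : ∑ k ∈ t, M k m * (x k - x m) ^ 2 ≤ Q2 := by
    calc ∑ k ∈ t, M k m * (x k - x m) ^ 2
        ≤ ∑ k ∈ Fa n, M k m * (x k - x m) ^ 2 := by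
          apply Finset.sum_le_sum_of_subset_of_nonneg hsubt
          intro k hk _
          have := hM.2.1 k m
          positivity
      _ ≤ Q2 := by
          apply Finset.sum_le_sum
          intro k _
          apply Finset.single_le_sum (f := fun m' => M k m' * (x k - x m') ^ 2)
            (fun m' _ => by have := hM.2.1 k m'; positivity)
          exact mem_Fb.2 hm
  have hcard : ((n:ℝ)-1) ≤ (t.card : ℝ) := by
    have h4 := card_Fa_nepair hn (n := n) ((m:ℕ))
    have h5 : n ≤ ((Fa n).filter (fun k : Fin (2*n-1) => (m:ℕ) ≠ n + (k:ℕ))).card + 1 := by omega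
    have h6 : (n:ℝ) ≤ (t.card : ℝ) + 1 := by rw [ht]; exact_mod_cast h5
    linarith
  have hq := qf_split hn hbL hbLU hM x
  have hQ1n := Q1_nonneg hn hbL hbLU hM x
  have hQ2n := Q2_nonneg hn hbL hbLU hM x
  rw [hq]
  have hx2 : 0 ≤ bL * x m ^ 2 := by positivity
  nlinarith [mul_le_mul_of_nonneg_right hcard hx2]

lemma master_a (x : Fin (2*n-1) → ℝ) {j : Fin (2*n-1)} (hj : (j:ℕ) < n) :
    ((n:ℝ)-2) * bL * x j ^ 2 ≤ 6 * dotProduct x ((Mt n M).mulVec x) := by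
  classical
  set qfx := dotProduct x ((Mt n M).mulVec x) with hqf
  set Q1 := ∑ i ∈ Fa n, aa n M i * x i ^ 2 with hQ1
  set Q2 := ∑ i ∈ Fa n, ∑ m' ∈ Fb n, M i m' * (x i - x m') ^ 2 with hQ2
  set t := (Fb n).filter (fun m' : Fin (2*n-1) => (m':ℕ) ≠ n + (j:ℕ)) with ht
  have hsubt : t ⊆ Fb n := Finset.filter_subset _ _
  have hqfn : 0 ≤ qfx := qf_nonneg hn hbL hbLU hM x
  have hn1 : (0:ℝ) < (n:ℝ) - 1 := by
    have : (6:ℝ) ≤ (n:ℝ) := by exact_mod_cast hn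
    linarith
  have hper : ∀ m' ∈ t, bL * x j ^ 2
      ≤ 2 * (M j m' * (x j - x m') ^ 2) + 2 * (2 * qfx / ((n:ℝ)-1)) := by
    intro m' hm'
    simp only [ht, Finset.mem_filter] at hm'
    have hjm : bL ≤ M j m' := cross_ge hn hbL hbLU hM hj (mem_Fb.1 hm'.1) hm'.2
    have hmb := master_b hn hbL hbLU hM x (mem_Fb.1 hm'.1)
    rw [← hqf] at hmb
    -- bL x m'^2 ≤ 2 qfx/(n-1)
    have h1 : bL * x m' ^ 2 ≤ 2 * qfx / ((n:ℝ)-1) := by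
      rw [le_div_iff₀ hn1]
      nlinarith
    have e1 : bL * (x j - x m') ^ 2 ≤ M j m' * (x j - x m') ^ 2 :=
      mul_le_mul_of_nonneg_right hjm (sq_nonneg _)
    nlinarith [sq_nonneg (x j - 2 * x m')]
  have hS2 : ∑ m' ∈ t, M j m' * (x j - x m') ^ 2 ≤ Q2 := by
    calc ∑ m' ∈ t, M j m' * (x j - x m') ^ 2
        ≤ ∑ m' ∈ Fb n, M j m' * (x j - x m') ^ 2 := by
          apply Finset.sum_le_sum_of_subset_of_nonneg hsubt
          intro m' hm' _
          have := hM.2.1 j m'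
          positivity
      _ ≤ Q2 := by
          apply Finset.single_le_sum (f := fun k => ∑ m' ∈ Fb n, M k m' * (x k - x m') ^ 2)
          · intro k _
            apply Finset.sum_nonneg
            intro m' _
            have := hM.2.1 k m'
            positivity
          · exact mem_Fa.2 hj
  have hsum : (t.card : ℝ) * (bL * x j ^ 2)
      ≤ 2 * Q2 + (t.card : ℝ) * (2 * (2 * qfx / ((n:ℝ)-1))) := by
    calc (t.card : ℝ) * (bL * x j ^ 2) = ∑ _m' ∈ t, bL * x j ^ 2 := by
          rw [Finset.sum_const, nsmul_eq_mul]
      _ ≤ ∑ m' ∈ t, (2 * (M j m' * (x j - x m') ^ 2) + 2 * (2 * qfx / ((n:ℝ)-1))) :=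
          Finset.sum_le_sum hper
      _ = 2 * (∑ m' ∈ t, M j m' * (x j - x m') ^ 2) + (t.card:ℝ) * (2 * (2 * qfx / ((n:ℝ)-1))) := by
          rw [Finset.sum_add_distrib, ← Finset.mul_sum, Finset.sum_const, nsmul_eq_mul]
      _ ≤ 2 * Q2 + (t.card : ℝ) * (2 * (2 * qfx / ((n:ℝ)-1))) := by
          have := hS2; nlinarith
  have hcardup : (t.card : ℝ) ≤ (n:ℝ) - 1 := by
    have h4 : t.card ≤ (Fb n).card := Finset.card_le_card hsubt
    have h5 := card_Fb (n := n) (by omega)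
    have h6 : t.card + 1 ≤ n := by omega
    have h7 : (t.card : ℝ) + 1 ≤ (n:ℝ) := by exact_mod_cast h6
    linarith
  have hcard : ((n:ℝ)-2) ≤ (t.card : ℝ) := by
    have h4 := card_Fb_ne hn (n := n) (n + (j:ℕ))
    have h5 : n ≤ ((Fb n).filter (fun m' : Fin (2*n-1) => (m':ℕ) ≠ n + (j:ℕ))).card + 2 := by omega
    have h6 : (n:ℝ) ≤ (t.card : ℝ) + 2 := by rw [ht]; exact_mod_cast h5
    linarith
  have hq := qf_split hn hbL hbLU hM x
  rw [← hqf, ← hQ1, ← hQ2] at hq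
  have hQ1n := Q1_nonneg hn hbL hbLU hM x
  rw [← hQ1] at hQ1n
  have hx2 : 0 ≤ bL * x j ^ 2 := by positivity
  have key : ((n:ℝ)-2) * (bL * x j ^ 2) ≤ 2 * Q2 + ((n:ℝ)-1) * (2 * (2 * qfx / ((n:ℝ)-1))) := by
    have e1 : ((n:ℝ)-2) * (bL * x j ^ 2) ≤ (t.card : ℝ) * (bL * x j ^ 2) :=
      mul_le_mul_of_nonneg_right hcard hx2
    have e2 : (t.card : ℝ) * (2 * (2 * qfx / ((n:ℝ)-1)))
        ≤ ((n:ℝ)-1) * (2 * (2 * qfx / ((n:ℝ)-1))) := by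
      apply mul_le_mul_of_nonneg_right hcardup
      positivity
    linarith
  have e3 : ((n:ℝ)-1) * (2 * (2 * qfx / ((n:ℝ)-1))) = 4 * qfx := by
    field_simp
    ring
  rw [e3] at key
  nlinarith

lemma master (x : Fin (2*n-1) → ℝ) (j : Fin (2*n-1)) :
    (n:ℝ) * bL * x j ^ 2 ≤ 9 * dotProduct x ((Mt n M).mulVec x) := by
  have hqfn := qf_nonneg hn hbL hbLU hM x
  have h6 : (6:ℝ) ≤ (n:ℝ) := by exact_mod_cast hn
  have hx2 : 0 ≤ bL * x j ^ 2 := by positivity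
  rcases lt_or_ge ((j:ℕ)) n with hj | hj
  · have := master_a hn hbL hbLU hM x hj
    nlinarith
  · have := master_b hn hbL hbLU hM x hj
    nlinarith

lemma Mt_herm : (Mt n M).IsHermitian := by
  ext i k
  simp only [Matrix.conjTranspose_apply, Mt, Matrix.of_apply, star_trivial]
  rw [hM.1 k i]
  ring

lemma Mt_posdef : (Mt n M).PosDef := by
  refine Matrix.posDef_iff_dotProduct_mulVec.2 ⟨Mt_herm hn hbL hbLU hM, ?_⟩
  intro x hx
  obtain ⟨j, hj⟩ : ∃ j, x j ≠ 0 := by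
    by_contra h
    push_neg at h
    exact hx (funext h)
  have hm := master hn hbL hbLU hM x j
  have h6 : (6:ℝ) ≤ (n:ℝ) := by exact_mod_cast hn
  have hn0 : (0:ℝ) < (n:ℝ) := by linarith
  have hx2 : 0 < x j ^ 2 := by positivity
  have : 0 < (n:ℝ) * bL * x j ^ 2 := by
    apply mul_pos (mul_pos hn0 hbL) hx2
  simpa using by nlinarith

lemma Mt_det_unit : IsUnit (Mt n M).det :=
  isUnit_iff_ne_zero.2 (ne_of_gt (Mt_posdef hn hbL hbLU hM).det_pos)

lemma MtK (i j : Fin (2*n-1)) :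
    ∑ k, Mt n M i k * (Mt n M)⁻¹ k j = if i = j then 1 else 0 := by
  have h := Matrix.mul_nonsing_inv (Mt n M) (Mt_det_unit hn hbL hbLU hM)
  have := congrFun (congrFun h i) j
  rw [Matrix.mul_apply] at this
  rw [this, Matrix.one_apply]

lemma K_mulVec (j : Fin (2*n-1)) :
    (Mt n M).mulVec (fun i => (Mt n M)⁻¹ i j) = fun i => if i = j then 1 else 0 := by
  funext i
  simp only [Matrix.mulVec, dotProduct]
  exact MtK hn hbL hbLU hM i j

lemma qf_col (j : Fin (2*n-1)) :
    dotProduct (fun i => (Mt n M)⁻¹ i j)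
      ((Mt n M).mulVec (fun i => (Mt n M)⁻¹ i j)) = (Mt n M)⁻¹ j j := by
  rw [K_mulVec hn hbL hbLU hM j]
  simp only [dotProduct, mul_ite, mul_one, mul_zero]
  rw [Finset.sum_ite_eq' univ j (fun i => (Mt n M)⁻¹ i j)]
  simp

lemma K_diag_nonneg (j : Fin (2*n-1)) : 0 ≤ (Mt n M)⁻¹ j j := by
  have h := master hn hbL hbLU hM (fun i => (Mt n M)⁻¹ i j) j
  rw [qf_col hn hbL hbLU hM j] at h
  have h6 : (6:ℝ) ≤ (n:ℝ) := by exact_mod_cast hn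
  have h0 : 0 ≤ (n:ℝ) * bL * ((Mt n M)⁻¹ j j) ^ 2 := by positivity
  linarith

lemma K_diag_le (j : Fin (2*n-1)) : (Mt n M)⁻¹ j j ≤ 9 / ((n:ℝ) * bL) := by
  have h := master hn hbL hbLU hM (fun i => (Mt n M)⁻¹ i j) j
  rw [qf_col hn hbL hbLU hM j] at h
  have h6 : (6:ℝ) ≤ (n:ℝ) := by exact_mod_cast hn
  have hnbL : 0 < (n:ℝ) * bL := by nlinarith
  rw [le_div_iff₀ hnbL]
  nlinarith [K_diag_nonneg hn hbL hbLU hM j]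

lemma K_abs_le (i j : Fin (2*n-1)) : |(Mt n M)⁻¹ i j| ≤ 9 / ((n:ℝ) * bL) := by
  have h := master hn hbL hbLU hM (fun i => (Mt n M)⁻¹ i j) i
  rw [qf_col hn hbL hbLU hM j] at h
  have h6 : (6:ℝ) ≤ (n:ℝ) := by exact_mod_cast hn
  have hnbL : 0 < (n:ℝ) * bL := by nlinarith
  have hd := K_diag_le hn hbL hbLU hM j
  have hC : (0:ℝ) < 9 / ((n:ℝ) * bL) := by positivity
  -- (K i j)^2 ≤ (9/(n bL))^2
  have hsq : ((Mt n M)⁻¹ i j) ^ 2 ≤ (9 / ((n:ℝ) * bL)) ^ 2 := by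
    have h1 : (n:ℝ) * bL * ((Mt n M)⁻¹ i j) ^ 2 ≤ 9 * (9 / ((n:ℝ) * bL)) := by nlinarith
    rw [div_pow]
    rw [le_div_iff₀ (by positivity)]
    have : (9:ℝ) * (9 / ((n:ℝ) * bL)) * ((n:ℝ)*bL) = 81 := by field_simp; norm_num
    nlinarith
  rw [abs_le]
  constructor <;> nlinarith [sq_nonneg ((Mt n M)⁻¹ i j - 9 / ((n:ℝ)*bL)),
    sq_nonneg ((Mt n M)⁻¹ i j + 9 / ((n:ℝ)*bL))]

lemma row_id_a {i : Fin (2*n-1)} (hi : (i:ℕ) < n) (j : Fin (2*n-1)) :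
    M i i * (Mt n M)⁻¹ i j
      = (if i = j then 1 else 0) + ∑ m ∈ Fb n, M i m * (Mt n M)⁻¹ m j := by
  have h := MtK hn hbL hbLU hM i j
  rw [sum_split (fun k => Mt n M i k * (Mt n M)⁻¹ k j)] at h
  have hFa : ∑ k ∈ Fa n, Mt n M i k * (Mt n M)⁻¹ k j = M i i * (Mt n M)⁻¹ i j := by
    rw [Finset.sum_eq_single_of_mem i (mem_Fa.2 hi)]
    · rw [Mt_aa hi hi]
    · intro k hk hne
      rw [Mt_aa hi (mem_Fa.1 hk), hM.2.2.1 i k hi (mem_Fa.1 hk) (Ne.symm hne), zero_mul]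
  have hFb : ∑ k ∈ Fb n, Mt n M i k * (Mt n M)⁻¹ k j
      = -∑ m ∈ Fb n, M i m * (Mt n M)⁻¹ m j := by
    rw [← Finset.sum_neg_distrib]
    apply Finset.sum_congr rfl
    intro m hm
    rw [Mt_ab hi (mem_Fb.1 hm)]
    ring
  rw [hFa, hFb] at h
  linarith [h]

lemma row_id_b {m : Fin (2*n-1)} (hm : n ≤ (m:ℕ)) (j : Fin (2*n-1)) :
    M m m * (Mt n M)⁻¹ m j
      = (if m = j then 1 else 0) + ∑ k ∈ Fa n, M k m * (Mt n M)⁻¹ k j := by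
  have h := MtK hn hbL hbLU hM m j
  rw [sum_split (fun k => Mt n M m k * (Mt n M)⁻¹ k j)] at h
  have hFb : ∑ k ∈ Fb n, Mt n M m k * (Mt n M)⁻¹ k j = M m m * (Mt n M)⁻¹ m j := by
    rw [Finset.sum_eq_single_of_mem m (mem_Fb.2 hm)]
    · rw [Mt_bb hm hm]
    · intro k hk hne
      rw [Mt_bb hm (mem_Fb.1 hk), hM.2.2.2.1 m k hm (mem_Fb.1 hk) (Ne.symm hne), zero_mul]
  have hFa : ∑ k ∈ Fa n, Mt n M m k * (Mt n M)⁻¹ k j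
      = -∑ k ∈ Fa n, M k m * (Mt n M)⁻¹ k j := by
    rw [← Finset.sum_neg_distrib]
    apply Finset.sum_congr rfl
    intro k hk
    rw [Mt_ba hm (mem_Fa.1 hk), hM.1 m k]
    ring
  rw [hFa, hFb] at h
  linarith [h]

lemma mean_id (j : Fin (2*n-1)) :
    ∑ k ∈ Fa n, aa n M k * (Mt n M)⁻¹ k j = 1 := by
  have h : ∑ i, ∑ k, Mt n M i k * (Mt n M)⁻¹ k j = 1 := by
    have : ∀ i, ∑ k, Mt n M i k * (Mt n M)⁻¹ k j = if i = j then 1 else 0 :=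
      fun i => MtK hn hbL hbLU hM i j
    rw [Finset.sum_congr rfl (fun i _ => this i)]
    simp
  rw [Finset.sum_comm] at h
  -- column sums of Mt
  have hcolsum : ∀ k : Fin (2*n-1), ∑ i, Mt n M i k * (Mt n M)⁻¹ k j
      = (if (k:ℕ) < n then aa n M k else 0) * (Mt n M)⁻¹ k j := by
    intro k
    rw [← Finset.sum_mul]
    congr 1
    rcases lt_or_ge ((k:ℕ)) n with hk | hk
    · rw [if_pos hk, sum_split (fun i => Mt n M i k)]
      have h1 : ∑ i ∈ Fa n, Mt n M i k = M k k := by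
        rw [Finset.sum_eq_single_of_mem k (mem_Fa.2 hk)]
        · exact Mt_aa hk hk
        · intro b hb hbne
          rw [Mt_aa (mem_Fa.1 hb) hk]
          exact hM.2.2.1 b k (mem_Fa.1 hb) hk hbne
      have h2 : ∑ i ∈ Fb n, Mt n M i k = -rr n M k := by
        rw [rr, ← Finset.sum_neg_distrib]
        apply Finset.sum_congr rfl
        intro m hm
        rw [Mt_ba (mem_Fb.1 hm) hk, hM.1 m k]
      rw [h1, h2, aa]
      ring
    · rw [if_neg (not_lt.2 hk), sum_split (fun i => Mt n M i k)]
      have h1 : ∑ i ∈ Fa n, Mt n M i k = -M k k := by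
        have hc : M k k = ∑ l ∈ Fa n, M l k := hM.2.2.2.2.2.2.1 k hk
        rw [hc, ← Finset.sum_neg_distrib]
        apply Finset.sum_congr rfl
        intro l hl
        rw [Mt_ab (mem_Fa.1 hl) hk]
      have h2 : ∑ i ∈ Fb n, Mt n M i k = M k k := by
        rw [Finset.sum_eq_single_of_mem k (mem_Fb.2 hk)]
        · exact Mt_bb hk hk
        · intro b hb hbne
          rw [Mt_bb (mem_Fb.1 hb) hk]
          exact hM.2.2.2.1 b k (mem_Fb.1 hb) hk hbne
      rw [h1, h2]
      ring
  rw [Finset.sum_congr rfl (fun k _ => hcolsum k)] at h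
  rw [sum_split (fun k => (if (k:ℕ) < n then aa n M k else 0) * (Mt n M)⁻¹ k j)] at h
  have e1 : ∑ k ∈ Fa n, (if (k:ℕ) < n then aa n M k else 0) * (Mt n M)⁻¹ k j
      = ∑ k ∈ Fa n, aa n M k * (Mt n M)⁻¹ k j := by
    apply Finset.sum_congr rfl
    intro k hk
    rw [if_pos (mem_Fa.1 hk)]
  have e2 : ∑ k ∈ Fb n, (if (k:ℕ) < n then aa n M k else 0) * (Mt n M)⁻¹ k j = 0 := by
    apply Finset.sum_eq_zero
    intro k hk
    rw [if_neg (not_lt.2 (mem_Fb.1 hk)), zero_mul]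
  rw [e1, e2] at h
  linarith [h]

omit hn hbL hbLU hM in
lemma convex_est {t : Finset (Fin (2*n-1))} (p v : Fin (2*n-1) → ℝ)
    (hp0 : ∀ x ∈ t, 0 ≤ p x) (hp1 : ∑ x ∈ t, p x = 1)
    {C : ℝ} (hv : ∀ x ∈ t, |v x| ≤ C) : |∑ x ∈ t, p x * v x| ≤ C := by
  calc |∑ x ∈ t, p x * v x| ≤ ∑ x ∈ t, |p x * v x| := Finset.abs_sum_le_sum_abs _ _
    _ ≤ ∑ x ∈ t, p x * C := by
        apply Finset.sum_le_sum
        intro x hx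
        rw [abs_mul, abs_of_nonneg (hp0 x hx)]
        exact mul_le_mul_of_nonneg_left (hv x hx) (hp0 x hx)
    _ = C := by rw [← Finset.sum_mul, hp1, one_mul]

omit hn hbL hbLU hM in
lemma overlap_est {t : Finset (Fin (2*n-1))} (p q v : Fin (2*n-1) → ℝ)
    (hp0 : ∀ x ∈ t, 0 ≤ p x) (hq0 : ∀ x ∈ t, 0 ≤ q x)
    (hp1 : ∑ x ∈ t, p x = 1) (hq1 : ∑ x ∈ t, q x = 1)
    {lo hi θ : ℝ} (hv : ∀ x ∈ t, lo ≤ v x ∧ v x ≤ hi)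
    (hθ : θ ≤ ∑ x ∈ t, min (p x) (q x)) :
    |∑ x ∈ t, (p x - q x) * v x| ≤ (1-θ) * (hi - lo) := by
  have ht : t.Nonempty := by
    rcases Finset.eq_empty_or_nonempty t with h | h
    · rw [h] at hp1; simp at hp1
    · exact h
  obtain ⟨x0, hx0⟩ := ht
  have hlohi : lo ≤ hi := le_trans (hv x0 hx0).1 (hv x0 hx0).2
  set W := ∑ x ∈ t, min (p x) (q x) with hW
  have hW1 : W ≤ 1 := by
    rw [hW, ← hp1]
    exact Finset.sum_le_sum (fun x _ => min_le_left _ _)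
  have hsplit : ∑ x ∈ t, (p x - q x) * v x
      = (∑ x ∈ t, (p x - min (p x) (q x)) * v x)
        - ∑ x ∈ t, (q x - min (p x) (q x)) * v x := by
    rw [← Finset.sum_sub_distrib]
    exact Finset.sum_congr rfl (fun x _ => by ring)
  have hWsum_p : ∑ x ∈ t, (p x - min (p x) (q x)) * hi = (1 - W) * hi := by
    rw [← Finset.sum_mul, Finset.sum_sub_distrib, hp1, ← hW]
  have hWsum_p' : ∑ x ∈ t, (p x - min (p x) (q x)) * lo = (1 - W) * lo := by
    rw [← Finset.sum_mul, Finset.sum_sub_distrib, hp1, ← hW]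
  have hWsum_q : ∑ x ∈ t, (q x - min (p x) (q x)) * hi = (1 - W) * hi := by
    rw [← Finset.sum_mul, Finset.sum_sub_distrib, hq1, ← hW]
  have hWsum_q' : ∑ x ∈ t, (q x - min (p x) (q x)) * lo = (1 - W) * lo := by
    rw [← Finset.sum_mul, Finset.sum_sub_distrib, hq1, ← hW]
  have hup_p : ∑ x ∈ t, (p x - min (p x) (q x)) * v x ≤ (1 - W) * hi := by
    rw [← hWsum_p]
    apply Finset.sum_le_sum
    intro x hx
    exact mul_le_mul_of_nonneg_left (hv x hx).2 (by linarith [min_le_left (p x) (q x)])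
  have hlo_p : (1 - W) * lo ≤ ∑ x ∈ t, (p x - min (p x) (q x)) * v x := by
    rw [← hWsum_p']
    apply Finset.sum_le_sum
    intro x hx
    exact mul_le_mul_of_nonneg_left (hv x hx).1 (by linarith [min_le_left (p x) (q x)])
  have hup_q : ∑ x ∈ t, (q x - min (p x) (q x)) * v x ≤ (1 - W) * hi := by
    rw [← hWsum_q]
    apply Finset.sum_le_sum
    intro x hx
    exact mul_le_mul_of_nonneg_left (hv x hx).2 (by linarith [min_le_right (p x) (q x)])
  have hlo_q : (1 - W) * lo ≤ ∑ x ∈ t, (q x - min (p x) (q x)) * v x := by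
    rw [← hWsum_q']
    apply Finset.sum_le_sum
    intro x hx
    exact mul_le_mul_of_nonneg_left (hv x hx).1 (by linarith [min_le_right (p x) (q x)])
  have hmono : (1 - W) * (hi - lo) ≤ (1 - θ) * (hi - lo) :=
    mul_le_mul_of_nonneg_right (by linarith) (by linarith)
  rw [abs_le]
  constructor
  · rw [hsplit]; nlinarith
  · rw [hsplit]; nlinarith

lemma nreal6 : (6:ℝ) ≤ (n:ℝ) := by exact_mod_cast hn

lemma rr_pos {i : Fin (2*n-1)} (hi : (i:ℕ) < n) : 0 < rr n M i := by
  have h1 := rr_ge hn hbL hbLU hM hi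
  have h6 := nreal6 hn hbL hbLU hM
  nlinarith

lemma rr_half {i : Fin (2*n-1)} (hi : (i:ℕ) < n) : (n:ℝ)*bL/2 ≤ rr n M i := by
  have h1 := rr_ge hn hbL hbLU hM hi
  have h6 := nreal6 hn hbL hbLU hM
  nlinarith

lemma diag_half {i : Fin (2*n-1)} : (n:ℝ)*bL/2 ≤ M i i := by
  have h1 := diag_ge hn hbL hbLU hM (i := i)
  have h6 := nreal6 hn hbL hbLU hM
  nlinarith

lemma diag_b_le {m : Fin (2*n-1)} (hm : n ≤ (m:ℕ)) : M m m ≤ (n:ℝ) * bU := by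
  have hc : M m m = ∑ k ∈ Fa n, M k m := hM.2.2.2.2.2.2.1 m hm
  rw [hc]
  have h1 : ∑ k ∈ Fa n, M k m ≤ ∑ _k ∈ Fa n, bU :=
    Finset.sum_le_sum (fun k hk => cross_le hn hbL hbLU hM (mem_Fa.1 hk) hm)
  rw [Finset.sum_const, card_Fa (by omega), nsmul_eq_mul] at h1
  exact h1

-- spike bound: any cross ratio at most 2 bU/(n bL)
lemma frac_le_a {i m : Fin (2*n-1)} (hi : (i:ℕ) < n) (hm : n ≤ (m:ℕ)) :
    M i m / rr n M i ≤ 2*bU/((n:ℝ)*bL) := by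
  have h6 := nreal6 hn hbL hbLU hM
  have hr := rr_half hn hbL hbLU hM hi
  have hrpos := rr_pos hn hbL hbLU hM hi
  have hle := cross_le hn hbL hbLU hM hi hm
  have hnn := hM.2.1 i m
  rw [div_le_div_iff₀ hrpos (by nlinarith)]
  nlinarith

lemma frac_le_b {k m : Fin (2*n-1)} (hk : (k:ℕ) < n) (hm : n ≤ (m:ℕ)) :
    M k m / M m m ≤ 2*bU/((n:ℝ)*bL) := by
  have h6 := nreal6 hn hbL hbLU hM
  have hr := diag_half hn hbL hbLU hM (i := m)
  have hrpos := diag_pos hn hbL hbLU hM (i := m)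
  have hle := cross_le hn hbL hbLU hM hk hm
  have hnn := hM.2.1 k m
  rw [div_le_div_iff₀ hrpos (by nlinarith)]
  nlinarith

lemma kappa_le {i : Fin (2*n-1)} (hi : (i:ℕ) < n) :
    aa n M i / M i i ≤ 2*bU/((n:ℝ)*bL) := by
  have h6 := nreal6 hn hbL hbLU hM
  have hr := diag_half hn hbL hbLU hM (i := i)
  have hrpos := diag_pos hn hbL hbLU hM (i := i)
  have hle := (aa_mem hn hbL hbLU hM hi).2
  have hnn := (aa_mem hn hbL hbLU hM hi).1
  rw [div_le_div_iff₀ hrpos (by nlinarith)]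
  nlinarith

lemma kappa_nonneg {i : Fin (2*n-1)} (hi : (i:ℕ) < n) : 0 ≤ aa n M i / M i i := by
  have h1 := (aa_mem hn hbL hbLU hM hi).1
  have h2 := diag_pos hn hbL hbLU hM (i := i)
  exact div_nonneg (by linarith) (le_of_lt h2)

-- row-stochasticity
lemma stoch_a {i : Fin (2*n-1)} (hi : (i:ℕ) < n) :
    ∑ m ∈ Fb n, M i m / rr n M i = 1 := by
  rw [← Finset.sum_div, ← rr]
  exact div_self (ne_of_gt (rr_pos hn hbL hbLU hM hi))

lemma stoch_b {m : Fin (2*n-1)} (hm : n ≤ (m:ℕ)) :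
    ∑ k ∈ Fa n, M k m / M m m = 1 := by
  have hc : M m m = ∑ k ∈ Fa n, M k m := hM.2.2.2.2.2.2.1 m hm
  rw [← Finset.sum_div, ← hc]
  exact div_self (ne_of_gt (diag_pos hn hbL hbLU hM))

lemma theta_row_a {i i' : Fin (2*n-1)} (hi : (i:ℕ) < n) (hi' : (i':ℕ) < n) :
    bL/(2*bU) ≤ ∑ m ∈ Fb n, min (M i m / rr n M i) (M i' m / rr n M i') := by
  classical
  have h6 := nreal6 hn hbL hbLU hM
  have hbU : 0 < bU := lt_of_lt_of_le hbL hbLU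
  set good := (Fb n).filter
    (fun m : Fin (2*n-1) => (m:ℕ) ≠ n + (i:ℕ) ∧ (m:ℕ) ≠ n + (i':ℕ)) with hgood
  have hcard : n - 3 ≤ good.card := card_Fb_ne2 hn (n + (i:ℕ)) (n + (i':ℕ))
  have hterm : ∀ m ∈ good, bL/((n:ℝ)*bU) ≤ min (M i m / rr n M i) (M i' m / rr n M i') := by
    intro m hm
    simp only [hgood, Finset.mem_filter] at hm
    obtain ⟨hmb, hne1, hne2⟩ := hm
    have hmb' := mem_Fb.1 hmb
    have key : ∀ (a : Fin (2*n-1)), (a:ℕ) < n → (m:ℕ) ≠ n + (a:ℕ) →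
        bL/((n:ℝ)*bU) ≤ M a m / rr n M a := by
      intro a ha hane
      have h1 : bL ≤ M a m := cross_ge hn hbL hbLU hM ha hmb' hane
      have h2 : rr n M a ≤ ((n:ℝ)-1)*bU := rr_le hn hbL hbLU hM ha
      have h3 : 0 < rr n M a := rr_pos hn hbL hbLU hM ha
      rw [div_le_div_iff₀ (by nlinarith) h3]
      nlinarith
    exact le_min (key i hi hne1) (key i' hi' hne2)
  have hnn : ∀ m ∈ Fb n, 0 ≤ min (M i m / rr n M i) (M i' m / rr n M i') := by
    intro m hm
    apply le_min
    · exact div_nonneg (hM.2.1 i m) (le_of_lt (rr_pos hn hbL hbLU hM hi))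
    · exact div_nonneg (hM.2.1 i' m) (le_of_lt (rr_pos hn hbL hbLU hM hi'))
  have hsum1 : ∑ m ∈ good, min (M i m / rr n M i) (M i' m / rr n M i')
      ≤ ∑ m ∈ Fb n, min (M i m / rr n M i) (M i' m / rr n M i') :=
    Finset.sum_le_sum_of_subset_of_nonneg (Finset.filter_subset _ _)
      (fun m hm _ => hnn m hm)
  have hsum2 : (good.card : ℝ) * (bL/((n:ℝ)*bU))
      ≤ ∑ m ∈ good, min (M i m / rr n M i) (M i' m / rr n M i') := by
    calc (good.card : ℝ) * (bL/((n:ℝ)*bU)) = ∑ _m ∈ good, bL/((n:ℝ)*bU) := by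
          rw [Finset.sum_const, nsmul_eq_mul]
      _ ≤ _ := Finset.sum_le_sum hterm
  have hc : ((n:ℝ)-3) ≤ (good.card : ℝ) := by
    have h4 : n ≤ good.card + 3 := by omega
    have h5 : (n:ℝ) ≤ (good.card:ℝ) + 3 := by exact_mod_cast h4
    linarith
  have hn0 : (0:ℝ) < (n:ℝ) := by linarith
  have hfinal : bL/(2*bU) ≤ ((n:ℝ)-3) * (bL/((n:ℝ)*bU)) := by
    rw [div_le_iff₀ (by positivity : (0:ℝ) < 2*bU)]
    have e1 : ((n:ℝ)-3) * (bL/((n:ℝ)*bU)) * (2*bU) = 2*((n:ℝ)-3)*bL/(n:ℝ) := by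
      field_simp
    rw [e1, le_div_iff₀ hn0]
    nlinarith
  have : ((n:ℝ)-3) * (bL/((n:ℝ)*bU)) ≤ (good.card : ℝ) * (bL/((n:ℝ)*bU)) :=
    mul_le_mul_of_nonneg_right hc (by positivity)
  linarith

lemma theta_row_b {m m' : Fin (2*n-1)} (hm : n ≤ (m:ℕ)) (hm' : n ≤ (m':ℕ)) :
    bL/(2*bU) ≤ ∑ k ∈ Fa n, min (M k m / M m m) (M k m' / M m' m') := by
  classical
  have h6 := nreal6 hn hbL hbLU hM
  have hbU : 0 < bU := lt_of_lt_of_le hbL hbLU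
  set good := (Fa n).filter
    (fun k : Fin (2*n-1) => (m:ℕ) ≠ n + (k:ℕ) ∧ (m':ℕ) ≠ n + (k:ℕ)) with hgood
  have hcard : n - 2 ≤ good.card := card_Fa_nepair2 hn ((m:ℕ)) ((m':ℕ))
  have hterm : ∀ k ∈ good, bL/((n:ℝ)*bU) ≤ min (M k m / M m m) (M k m' / M m' m') := by
    intro k hk
    simp only [hgood, Finset.mem_filter] at hk
    obtain ⟨hka, hne1, hne2⟩ := hk
    have hka' := mem_Fa.1 hka
    have key : ∀ (b : Fin (2*n-1)), n ≤ (b:ℕ) → (b:ℕ) ≠ n + (k:ℕ) →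
        bL/((n:ℝ)*bU) ≤ M k b / M b b := by
      intro b hb hbne
      have h1 : bL ≤ M k b := cross_ge hn hbL hbLU hM hka' hb hbne
      have h2 : M b b ≤ (n:ℝ)*bU := diag_b_le hn hbL hbLU hM hb
      have h3 : 0 < M b b := diag_pos hn hbL hbLU hM
      rw [div_le_div_iff₀ (by nlinarith) h3]
      nlinarith
    exact le_min (key m hm (fun h => hne1 h)) (key m' hm' (fun h => hne2 h))
  have hnn : ∀ k ∈ Fa n, 0 ≤ min (M k m / M m m) (M k m' / M m' m') := by
    intro k _
    apply le_min
    · exact div_nonneg (hM.2.1 k m) (le_of_lt (diag_pos hn hbL hbLU hM))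
    · exact div_nonneg (hM.2.1 k m') (le_of_lt (diag_pos hn hbL hbLU hM))
  have hsum1 : ∑ k ∈ good, min (M k m / M m m) (M k m' / M m' m')
      ≤ ∑ k ∈ Fa n, min (M k m / M m m) (M k m' / M m' m') :=
    Finset.sum_le_sum_of_subset_of_nonneg (Finset.filter_subset _ _)
      (fun k hk _ => hnn k hk)
  have hsum2 : (good.card : ℝ) * (bL/((n:ℝ)*bU))
      ≤ ∑ k ∈ good, min (M k m / M m m) (M k m' / M m' m') := by
    calc (good.card : ℝ) * (bL/((n:ℝ)*bU)) = ∑ _k ∈ good, bL/((n:ℝ)*bU) := by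
          rw [Finset.sum_const, nsmul_eq_mul]
      _ ≤ _ := Finset.sum_le_sum hterm
  have hc : ((n:ℝ)-3) ≤ (good.card : ℝ) := by
    have h4 : n ≤ good.card + 3 := by omega
    have h5 : (n:ℝ) ≤ (good.card:ℝ) + 3 := by exact_mod_cast h4
    linarith
  have hn0 : (0:ℝ) < (n:ℝ) := by linarith
  have hfinal : bL/(2*bU) ≤ ((n:ℝ)-3) * (bL/((n:ℝ)*bU)) := by
    rw [div_le_iff₀ (by positivity : (0:ℝ) < 2*bU)]
    have e1 : ((n:ℝ)-3) * (bL/((n:ℝ)*bU)) * (2*bU) = 2*((n:ℝ)-3)*bL/(n:ℝ) := by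
      field_simp
    rw [e1, le_div_iff₀ hn0]
    nlinarith
  have : ((n:ℝ)-3) * (bL/((n:ℝ)*bU)) ≤ (good.card : ℝ) * (bL/((n:ℝ)*bU)) :=
    mul_le_mul_of_nonneg_right hc (by positivity)
  linarith

lemma col_eq_a {i : Fin (2*n-1)} (hi : (i:ℕ) < n) (j : Fin (2*n-1)) :
    (Mt n M)⁻¹ i j = (if i = j then 1/M i i else 0)
      + (1 - aa n M i / M i i) * ∑ m ∈ Fb n, (M i m / rr n M i) * (Mt n M)⁻¹ m j := by
  have hrow := row_id_a hn hbL hbLU hM hi j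
  have hd0 : M i i ≠ 0 := ne_of_gt (diag_pos hn hbL hbLU hM)
  have hr0 : rr n M i ≠ 0 := ne_of_gt (rr_pos hn hbL hbLU hM hi)
  have hPsum : ∑ m ∈ Fb n, (M i m / rr n M i) * (Mt n M)⁻¹ m j
      = (∑ m ∈ Fb n, M i m * (Mt n M)⁻¹ m j) / rr n M i := by
    rw [Finset.sum_div]
    exact Finset.sum_congr rfl fun m _ => div_mul_eq_mul_div _ _ _
  have e1 : (1 - aa n M i / M i i) * ∑ m ∈ Fb n, (M i m / rr n M i) * (Mt n M)⁻¹ m j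
      = (∑ m ∈ Fb n, M i m * (Mt n M)⁻¹ m j) / M i i := by
    rw [hPsum, aa]
    field_simp
    ring
  rw [e1]
  by_cases hij : i = j
  · rw [if_pos hij] at hrow ⊢
    have : (Mt n M)⁻¹ i j = (1 + ∑ m ∈ Fb n, M i m * (Mt n M)⁻¹ m j) / M i i := by
      rw [eq_div_iff hd0]
      linarith [hrow]
    rw [this, add_div]
  · rw [if_neg hij] at hrow ⊢
    have : (Mt n M)⁻¹ i j = (∑ m ∈ Fb n, M i m * (Mt n M)⁻¹ m j) / M i i := by
      rw [eq_div_iff hd0]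
      linarith [hrow]
    rw [this, zero_add]

lemma col_eq_b {m : Fin (2*n-1)} (hm : n ≤ (m:ℕ)) (j : Fin (2*n-1)) :
    (Mt n M)⁻¹ m j = (if m = j then 1/M m m else 0)
      + ∑ k ∈ Fa n, (M k m / M m m) * (Mt n M)⁻¹ k j := by
  have hrow := row_id_b hn hbL hbLU hM hm j
  have hd0 : M m m ≠ 0 := ne_of_gt (diag_pos hn hbL hbLU hM)
  have hPsum : ∑ k ∈ Fa n, (M k m / M m m) * (Mt n M)⁻¹ k j
      = (∑ k ∈ Fa n, M k m * (Mt n M)⁻¹ k j) / M m m := by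
    rw [Finset.sum_div]
    exact Finset.sum_congr rfl fun k _ => div_mul_eq_mul_div _ _ _
  rw [hPsum]
  by_cases hmj : m = j
  · rw [if_pos hmj] at hrow ⊢
    have : (Mt n M)⁻¹ m j = (1 + ∑ k ∈ Fa n, M k m * (Mt n M)⁻¹ k j) / M m m := by
      rw [eq_div_iff hd0]
      linarith [hrow]
    rw [this, add_div]
  · rw [if_neg hmj] at hrow ⊢
    have : (Mt n M)⁻¹ m j = (∑ k ∈ Fa n, M k m * (Mt n M)⁻¹ k j) / M m m := by
      rw [eq_div_iff hd0]
      linarith [hrow]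
    rw [this, zero_add]

omit hn hbL hbLU hM in
lemma spike_split (t : Finset (Fin (2*n-1))) (p z : Fin (2*n-1) → ℝ) (j : Fin (2*n-1)) (lo : ℝ) :
    ∑ x ∈ t, p x * z x
      = (∑ x ∈ t, p x * (if x = j then lo else z x))
        + (if j ∈ t then p j * (z j - lo) else 0) := by
  by_cases hj : j ∈ t
  · rw [if_pos hj]
    have h1 : ∑ x ∈ t, (p x * z x - p x * (if x = j then lo else z x)) = p j * (z j - lo) := by
      rw [Finset.sum_eq_single_of_mem j hj]
      · rw [if_pos rfl]; ring
      · intro b _ hbne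
        rw [if_neg hbne]; ring
    rw [Finset.sum_sub_distrib] at h1
    linarith
  · rw [if_neg hj, add_zero]
    apply Finset.sum_congr rfl
    intro x hx
    have : x ≠ j := fun h => hj (h ▸ hx)
    rw [if_neg this]

lemma pair_bound_a (j : Fin (2*n-1)) {i i' : Fin (2*n-1)}
    (hi : i ∈ (Fa n).erase j) (hi' : i' ∈ (Fa n).erase j)
    {lo hi_ : ℝ}
    (hv : ∀ m ∈ (Fb n).erase j, lo ≤ (Mt n M)⁻¹ m j ∧ (Mt n M)⁻¹ m j ≤ hi_)
    (hloabs : |lo| ≤ 9/((n:ℝ)*bL)) (hlohi : lo ≤ hi_) :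
    (Mt n M)⁻¹ i j - (Mt n M)⁻¹ i' j
      ≤ (1 - bL/(2*bU)) * (hi_ - lo) + 12 * (bU * (9/((n:ℝ)*bL)) / ((n:ℝ)*bL)) := by
  obtain ⟨hine, hiFa⟩ := Finset.mem_erase.1 hi
  obtain ⟨hine', hiFa'⟩ := Finset.mem_erase.1 hi'
  have hia : (i:ℕ) < n := mem_Fa.1 hiFa
  have hia' : (i':ℕ) < n := mem_Fa.1 hiFa'
  have h6 := nreal6 hn hbL hbLU hM
  have hbU : 0 < bU := lt_of_lt_of_le hbL hbLU
  have hKb : ∀ m : Fin (2*n-1), |(Mt n M)⁻¹ m j| ≤ 9/((n:ℝ)*bL) :=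
    fun m => K_abs_le hn hbL hbLU hM m j
  -- range of modified vector
  have hz'range : ∀ m ∈ Fb n,
      lo ≤ (if m = j then lo else (Mt n M)⁻¹ m j)
        ∧ (if m = j then lo else (Mt n M)⁻¹ m j) ≤ hi_ := by
    intro m hm
    by_cases hmj : m = j
    · rw [if_pos hmj]; exact ⟨le_refl _, hlohi⟩
    · rw [if_neg hmj]
      exact hv m (Finset.mem_erase.2 ⟨hmj, hm⟩)
  -- overlap estimate
  have hov : |∑ m ∈ Fb n, (M i m / rr n M i - M i' m / rr n M i')
        * (if m = j then lo else (Mt n M)⁻¹ m j)|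
      ≤ (1 - bL/(2*bU)) * (hi_ - lo) := by
    apply overlap_est
    · intro m _; exact div_nonneg (hM.2.1 i m) (le_of_lt (rr_pos hn hbL hbLU hM hia))
    · intro m _; exact div_nonneg (hM.2.1 i' m) (le_of_lt (rr_pos hn hbL hbLU hM hia'))
    · exact stoch_a hn hbL hbLU hM hia
    · exact stoch_a hn hbL hbLU hM hia'
    · exact hz'range
    · exact theta_row_a hn hbL hbLU hM hia hia'
  -- spike bounds
  have hcbound : ∀ (a : Fin (2*n-1)), (a:ℕ) < n →
      |(if j ∈ Fb n then (M a j / rr n M a) * ((Mt n M)⁻¹ j j - lo) else 0)|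
        ≤ 2*bU/((n:ℝ)*bL) * (2 * (9/((n:ℝ)*bL))) := by
    intro a ha
    by_cases hj : j ∈ Fb n
    · rw [if_pos hj]
      rw [abs_mul]
      apply mul_le_mul
      · rw [abs_of_nonneg (div_nonneg (hM.2.1 a j) (le_of_lt (rr_pos hn hbL hbLU hM ha)))]
        exact frac_le_a hn hbL hbLU hM ha (mem_Fb.1 hj)
      · calc |(Mt n M)⁻¹ j j - lo| ≤ |(Mt n M)⁻¹ j j| + |lo| := abs_sub _ _
          _ ≤ 9/((n:ℝ)*bL) + 9/((n:ℝ)*bL) := add_le_add (hKb j) hloabs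
          _ = 2 * (9/((n:ℝ)*bL)) := by ring
      · exact abs_nonneg _
      · positivity
    · rw [if_neg hj, abs_zero]
      positivity
  -- convex bounds
  have hPconv : ∀ (a : Fin (2*n-1)), (a:ℕ) < n →
      |∑ m ∈ Fb n, (M a m / rr n M a) * (Mt n M)⁻¹ m j| ≤ 9/((n:ℝ)*bL) := by
    intro a ha
    apply convex_est
    · intro m _; exact div_nonneg (hM.2.1 a m) (le_of_lt (rr_pos hn hbL hbLU hM ha))
    · exact stoch_a hn hbL hbLU hM ha
    · intro m _; exact hKb m
  -- column equations
  have hcol1 : (Mt n M)⁻¹ i j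
      = ∑ m ∈ Fb n, (M i m / rr n M i) * (Mt n M)⁻¹ m j
        - (aa n M i / M i i) * ∑ m ∈ Fb n, (M i m / rr n M i) * (Mt n M)⁻¹ m j := by
    have h := col_eq_a hn hbL hbLU hM hia j
    rw [if_neg hine] at h
    rw [h]; ring
  have hcol2 : (Mt n M)⁻¹ i' j
      = ∑ m ∈ Fb n, (M i' m / rr n M i') * (Mt n M)⁻¹ m j
        - (aa n M i' / M i' i') * ∑ m ∈ Fb n, (M i' m / rr n M i') * (Mt n M)⁻¹ m j := by
    have h := col_eq_a hn hbL hbLU hM hia' j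
    rw [if_neg hine'] at h
    rw [h]; ring
  -- spike splits
  have hsp1 := spike_split (Fb n) (fun m => M i m / rr n M i)
    (fun m => (Mt n M)⁻¹ m j) j lo
  have hsp2 := spike_split (Fb n) (fun m => M i' m / rr n M i')
    (fun m => (Mt n M)⁻¹ m j) j lo
  beta_reduce at hsp1 hsp2
  -- difference of primed sums
  have hdiff : (∑ m ∈ Fb n, (M i m / rr n M i) * (if m = j then lo else (Mt n M)⁻¹ m j))
      - (∑ m ∈ Fb n, (M i' m / rr n M i') * (if m = j then lo else (Mt n M)⁻¹ m j))
      = ∑ m ∈ Fb n, (M i m / rr n M i - M i' m / rr n M i')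
          * (if m = j then lo else (Mt n M)⁻¹ m j) := by
    rw [← Finset.sum_sub_distrib]
    exact Finset.sum_congr rfl fun m _ => by ring
  -- kappa bounds
  have hk1 : |(aa n M i / M i i) * ∑ m ∈ Fb n, (M i m / rr n M i) * (Mt n M)⁻¹ m j|
      ≤ 2*bU/((n:ℝ)*bL) * (9/((n:ℝ)*bL)) := by
    rw [abs_mul]
    apply mul_le_mul
    · rw [abs_of_nonneg (kappa_nonneg hn hbL hbLU hM hia)]
      exact kappa_le hn hbL hbLU hM hia
    · exact hPconv i hia
    · exact abs_nonneg _
    · positivity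
  have hk2 : |(aa n M i' / M i' i') * ∑ m ∈ Fb n, (M i' m / rr n M i') * (Mt n M)⁻¹ m j|
      ≤ 2*bU/((n:ℝ)*bL) * (9/((n:ℝ)*bL)) := by
    rw [abs_mul]
    apply mul_le_mul
    · rw [abs_of_nonneg (kappa_nonneg hn hbL hbLU hM hia')]
      exact kappa_le hn hbL hbLU hM hia'
    · exact hPconv i' hia'
    · exact abs_nonneg _
    · positivity
  -- assemble
  have hc1 := hcbound i hia
  have hc2 := hcbound i' hia'
  have habs1 := abs_le.1 hov
  have habs2 := abs_le.1 hc1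
  have habs3 := abs_le.1 hc2
  have habs4 := abs_le.1 hk1
  have habs5 := abs_le.1 hk2
  have hfin : (Mt n M)⁻¹ i j - (Mt n M)⁻¹ i' j
      = (∑ m ∈ Fb n, (M i m / rr n M i - M i' m / rr n M i')
            * (if m = j then lo else (Mt n M)⁻¹ m j))
        + (if j ∈ Fb n then (M i j / rr n M i) * ((Mt n M)⁻¹ j j - lo) else 0)
        - (if j ∈ Fb n then (M i' j / rr n M i') * ((Mt n M)⁻¹ j j - lo) else 0)
        - (aa n M i / M i i) * ∑ m ∈ Fb n, (M i m / rr n M i) * (Mt n M)⁻¹ m j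
        + (aa n M i' / M i' i') * ∑ m ∈ Fb n, (M i' m / rr n M i') * (Mt n M)⁻¹ m j := by
    rw [hcol1, hcol2, ← hdiff]
    rw [hsp1, hsp2]
    ring
  have e9 : 2*bU/((n:ℝ)*bL) * (2 * (9/((n:ℝ)*bL))) + 2*bU/((n:ℝ)*bL) * (2 * (9/((n:ℝ)*bL)))
      + 2*bU/((n:ℝ)*bL) * (9/((n:ℝ)*bL)) + 2*bU/((n:ℝ)*bL) * (9/((n:ℝ)*bL))
      = 12 * (bU * (9/((n:ℝ)*bL)) / ((n:ℝ)*bL)) := by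
    field_simp
    ring
  linarith [hfin, habs1.2, habs2.2, habs3.2, habs4.2, habs5.2, habs2.1, habs3.1, habs4.1, habs5.1]

lemma pair_bound_b (j : Fin (2*n-1)) {m m' : Fin (2*n-1)}
    (hm : m ∈ (Fb n).erase j) (hm' : m' ∈ (Fb n).erase j)
    {lo hi_ : ℝ}
    (hv : ∀ k ∈ (Fa n).erase j, lo ≤ (Mt n M)⁻¹ k j ∧ (Mt n M)⁻¹ k j ≤ hi_)
    (hloabs : |lo| ≤ 9/((n:ℝ)*bL)) (hlohi : lo ≤ hi_) :
    (Mt n M)⁻¹ m j - (Mt n M)⁻¹ m' j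
      ≤ (1 - bL/(2*bU)) * (hi_ - lo) + 12 * (bU * (9/((n:ℝ)*bL)) / ((n:ℝ)*bL)) := by
  obtain ⟨hmne, hmFb⟩ := Finset.mem_erase.1 hm
  obtain ⟨hmne', hmFb'⟩ := Finset.mem_erase.1 hm'
  have hmb : n ≤ (m:ℕ) := mem_Fb.1 hmFb
  have hmb' : n ≤ (m':ℕ) := mem_Fb.1 hmFb'
  have h6 := nreal6 hn hbL hbLU hM
  have hbU : 0 < bU := lt_of_lt_of_le hbL hbLU
  have hKb : ∀ k : Fin (2*n-1), |(Mt n M)⁻¹ k j| ≤ 9/((n:ℝ)*bL) :=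
    fun k => K_abs_le hn hbL hbLU hM k j
  have hz'range : ∀ k ∈ Fa n,
      lo ≤ (if k = j then lo else (Mt n M)⁻¹ k j)
        ∧ (if k = j then lo else (Mt n M)⁻¹ k j) ≤ hi_ := by
    intro k hk
    by_cases hkj : k = j
    · rw [if_pos hkj]; exact ⟨le_refl _, hlohi⟩
    · rw [if_neg hkj]
      exact hv k (Finset.mem_erase.2 ⟨hkj, hk⟩)
  have hov : |∑ k ∈ Fa n, (M k m / M m m - M k m' / M m' m')
        * (if k = j then lo else (Mt n M)⁻¹ k j)|
      ≤ (1 - bL/(2*bU)) * (hi_ - lo) := by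
    apply overlap_est
    · intro k _; exact div_nonneg (hM.2.1 k m) (le_of_lt (diag_pos hn hbL hbLU hM))
    · intro k _; exact div_nonneg (hM.2.1 k m') (le_of_lt (diag_pos hn hbL hbLU hM))
    · exact stoch_b hn hbL hbLU hM hmb
    · exact stoch_b hn hbL hbLU hM hmb'
    · exact hz'range
    · exact theta_row_b hn hbL hbLU hM hmb hmb'
  have hcbound : ∀ (b : Fin (2*n-1)), n ≤ (b:ℕ) →
      |(if j ∈ Fa n then (M j b / M b b) * ((Mt n M)⁻¹ j j - lo) else 0)|
        ≤ 2*bU/((n:ℝ)*bL) * (2 * (9/((n:ℝ)*bL))) := by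
    intro b hb
    by_cases hj : j ∈ Fa n
    · rw [if_pos hj]
      rw [abs_mul]
      apply mul_le_mul
      · rw [abs_of_nonneg (div_nonneg (hM.2.1 j b) (le_of_lt (diag_pos hn hbL hbLU hM)))]
        exact frac_le_b hn hbL hbLU hM (mem_Fa.1 hj) hb
      · calc |(Mt n M)⁻¹ j j - lo| ≤ |(Mt n M)⁻¹ j j| + |lo| := abs_sub _ _
          _ ≤ 9/((n:ℝ)*bL) + 9/((n:ℝ)*bL) := add_le_add (hKb j) hloabs
          _ = 2 * (9/((n:ℝ)*bL)) := by ring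
      · exact abs_nonneg _
      · positivity
    · rw [if_neg hj, abs_zero]
      positivity
  have hcol1 : (Mt n M)⁻¹ m j = ∑ k ∈ Fa n, (M k m / M m m) * (Mt n M)⁻¹ k j := by
    have h := col_eq_b hn hbL hbLU hM hmb j
    rw [if_neg hmne] at h
    rw [h, zero_add]
  have hcol2 : (Mt n M)⁻¹ m' j = ∑ k ∈ Fa n, (M k m' / M m' m') * (Mt n M)⁻¹ k j := by
    have h := col_eq_b hn hbL hbLU hM hmb' j
    rw [if_neg hmne'] at h
    rw [h, zero_add]
  have hsp1 := spike_split (Fa n) (fun k => M k m / M m m)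
    (fun k => (Mt n M)⁻¹ k j) j lo
  have hsp2 := spike_split (Fa n) (fun k => M k m' / M m' m')
    (fun k => (Mt n M)⁻¹ k j) j lo
  beta_reduce at hsp1 hsp2
  have hdiff : (∑ k ∈ Fa n, (M k m / M m m) * (if k = j then lo else (Mt n M)⁻¹ k j))
      - (∑ k ∈ Fa n, (M k m' / M m' m') * (if k = j then lo else (Mt n M)⁻¹ k j))
      = ∑ k ∈ Fa n, (M k m / M m m - M k m' / M m' m')
          * (if k = j then lo else (Mt n M)⁻¹ k j) := by
    rw [← Finset.sum_sub_distrib]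
    exact Finset.sum_congr rfl fun k _ => by ring
  have hc1 := hcbound m hmb
  have hc2 := hcbound m' hmb'
  -- rewrite spikes: note M j m = M m j symmetry not needed; spike uses M j b with b = m
  have hfin : (Mt n M)⁻¹ m j - (Mt n M)⁻¹ m' j
      = (∑ k ∈ Fa n, (M k m / M m m - M k m' / M m' m')
            * (if k = j then lo else (Mt n M)⁻¹ k j))
        + (if j ∈ Fa n then (M j m / M m m) * ((Mt n M)⁻¹ j j - lo) else 0)
        - (if j ∈ Fa n then (M j m' / M m' m') * ((Mt n M)⁻¹ j j - lo) else 0) := by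
    rw [hcol1, hcol2, ← hdiff, hsp1, hsp2]
    ring
  have habs1 := abs_le.1 hov
  have habs2 := abs_le.1 hc1
  have habs3 := abs_le.1 hc2
  have hepos : (0:ℝ) ≤ bU * (9/((n:ℝ)*bL)) / ((n:ℝ)*bL) := by positivity
  have e9 : 2*bU/((n:ℝ)*bL) * (2 * (9/((n:ℝ)*bL))) = 4 * (bU * (9/((n:ℝ)*bL)) / ((n:ℝ)*bL)) := by
    field_simp
    ring
  linarith [hfin, habs1.2, habs2.2, habs3.2, habs2.1, habs3.1]

lemma mean_dev (j i0 : Fin (2*n-1)) :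
    (Mt n M)⁻¹ i0 j - 1/ss n M
      = ∑ k ∈ Fa n, (aa n M k / ss n M) * ((Mt n M)⁻¹ i0 j - (Mt n M)⁻¹ k j) := by
  have hsp := ss_pos hn hbL hbLU hM
  have hs0 : ss n M ≠ 0 := ne_of_gt hsp
  have hmid := mean_id hn hbL hbLU hM j
  have e1 : ∀ k ∈ Fa n, (aa n M k / ss n M) * ((Mt n M)⁻¹ i0 j - (Mt n M)⁻¹ k j)
      = (aa n M k * (Mt n M)⁻¹ i0 j)/ss n M - (aa n M k * (Mt n M)⁻¹ k j)/ss n M :=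
    fun k _ => by ring
  rw [Finset.sum_congr rfl e1, Finset.sum_sub_distrib, ← Finset.sum_div, ← Finset.sum_div,
    hmid, ← Finset.sum_mul, ← ss]
  field_simp

lemma ss_inv_le : 1/ss n M ≤ 1/((n:ℝ)*bL) := by
  have h6 := nreal6 hn hbL hbLU hM
  have h1 := ss_ge hn hbL hbLU hM
  have h2 : (0:ℝ) < (n:ℝ)*bL := by nlinarith
  exact one_div_le_one_div_of_le h2 h1

set_option maxHeartbeats 3200000 in
lemma core_est (j i : Fin (2*n-1)) :
    |(Mt n M)⁻¹ i j - (if i = j then 1/M i i else 0) - 1/ss n M|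
      ≤ 700 * (bU^2 / (bL^3 * (n:ℝ)^2)) := by
  classical
  have h6 := nreal6 hn hbL hbLU hM
  have hbU : 0 < bU := lt_of_lt_of_le hbL hbLU
  have hn0 : (0:ℝ) < (n:ℝ) := by linarith
  have hnbL : (0:ℝ) < (n:ℝ)*bL := by positivity
  set G := bU^2 / (bL^3 * (n:ℝ)^2) with hG
  have hGpos : 0 < G := by rw [hG]; positivity
  set KB := 9/((n:ℝ)*bL) with hKB
  have hKBpos : 0 < KB := by rw [hKB]; positivity
  set EPS := bU * (9/((n:ℝ)*bL)) / ((n:ℝ)*bL) with hEPS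
  have hEPSpos : 0 < EPS := by rw [hEPS]; positivity
  have hEPSG : EPS * bU = 9 * G * bL := by
    rw [hEPS, hG]
    field_simp
  have hEPSle : EPS ≤ 9 * G := by nlinarith
  have hKb : ∀ a b : Fin (2*n-1), |(Mt n M)⁻¹ a b| ≤ KB := by
    intro a b; rw [hKB]; exact K_abs_le hn hbL hbLU hM a b
  have hEa : ((Fa n).erase j).Nonempty := by
    have ha0 : (⟨0, by omega⟩ : Fin (2*n-1)) ∈ Fa n := mem_Fa.2 (by simp; omega)
    have ha1 : (⟨1, by omega⟩ : Fin (2*n-1)) ∈ Fa n := mem_Fa.2 (by simp; omega)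
    by_cases h : j = (⟨0, by omega⟩ : Fin (2*n-1))
    · refine ⟨⟨1, by omega⟩, Finset.mem_erase.2 ⟨?_, ha1⟩⟩
      rw [h]
      intro hc
      simpa using congrArg Fin.val hc
    · exact ⟨⟨0, by omega⟩, Finset.mem_erase.2 ⟨fun hc => h (hc ▸ rfl), ha0⟩⟩
  have hEb : ((Fb n).erase j).Nonempty := by
    have hb0 : (⟨n, by omega⟩ : Fin (2*n-1)) ∈ Fb n := mem_Fb.2 (by simp)
    have hb1 : (⟨n+1, by omega⟩ : Fin (2*n-1)) ∈ Fb n := mem_Fb.2 (by simp)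
    by_cases h : j = (⟨n, by omega⟩ : Fin (2*n-1))
    · refine ⟨⟨n+1, by omega⟩, Finset.mem_erase.2 ⟨?_, hb1⟩⟩
      rw [h]
      intro hc
      simpa using congrArg Fin.val hc
    · exact ⟨⟨n, by omega⟩, Finset.mem_erase.2 ⟨fun hc => h (hc ▸ rfl), hb0⟩⟩
  set loa := ((Fa n).erase j).inf' hEa (fun k => (Mt n M)⁻¹ k j) with hloa
  set hia := ((Fa n).erase j).sup' hEa (fun k => (Mt n M)⁻¹ k j) with hhia
  set lob := ((Fb n).erase j).inf' hEb (fun k => (Mt n M)⁻¹ k j) with hlob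
  set hib := ((Fb n).erase j).sup' hEb (fun k => (Mt n M)⁻¹ k j) with hhib
  have hrange_a : ∀ k ∈ (Fa n).erase j,
      loa ≤ (Mt n M)⁻¹ k j ∧ (Mt n M)⁻¹ k j ≤ hia := by
    intro k hk
    constructor
    · rw [hloa]; exact Finset.inf'_le _ hk
    · rw [hhia]; exact Finset.le_sup' (fun k => (Mt n M)⁻¹ k j) hk
  have hrange_b : ∀ k ∈ (Fb n).erase j,
      lob ≤ (Mt n M)⁻¹ k j ∧ (Mt n M)⁻¹ k j ≤ hib := by
    intro k hk
    constructor
    · rw [hlob]; exact Finset.inf'_le _ hk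
    · rw [hhib]; exact Finset.le_sup' (fun k => (Mt n M)⁻¹ k j) hk
  obtain ⟨wa, hwa, hwaeq⟩ := Finset.exists_mem_eq_inf' hEa (fun k => (Mt n M)⁻¹ k j)
  obtain ⟨wa', hwa', hwaeq'⟩ := Finset.exists_mem_eq_sup' hEa (fun k => (Mt n M)⁻¹ k j)
  obtain ⟨wb, hwb, hwbeq⟩ := Finset.exists_mem_eq_inf' hEb (fun k => (Mt n M)⁻¹ k j)
  obtain ⟨wb', hwb', hwbeq'⟩ := Finset.exists_mem_eq_sup' hEb (fun k => (Mt n M)⁻¹ k j)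
  have hloa_abs : |loa| ≤ KB := by rw [hloa, hwaeq]; exact hKb wa j
  have hlob_abs : |lob| ≤ KB := by rw [hlob, hwbeq]; exact hKb wb j
  have hDa0 : loa ≤ hia := le_trans (hrange_a wa hwa).1 (hrange_a wa hwa).2
  have hDb0 : lob ≤ hib := le_trans (hrange_b wb hwb).1 (hrange_b wb hwb).2
  have hstepA : hia - loa ≤ (1 - bL/(2*bU)) * (hib - lob) + 12*EPS := by
    have h := pair_bound_a hn hbL hbLU hM j hwa' hwa hrange_b
      (by rw [hKB] at hlob_abs; exact hlob_abs) hDb0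
    rw [← hwaeq', ← hwaeq] at h
    rw [hEPS]
    exact h
  have hstepB : hib - lob ≤ (1 - bL/(2*bU)) * (hia - loa) + 12*EPS := by
    have h := pair_bound_b hn hbL hbLU hM j hwb' hwb hrange_a
      (by rw [hKB] at hloa_abs; exact hloa_abs) hDa0
    rw [← hwbeq', ← hwbeq] at h
    rw [hEPS]
    exact h
  set θ := bL/(2*bU) with hθ
  have hθpos : 0 < θ := by rw [hθ]; positivity
  have hθle : θ ≤ 1/2 := by
    rw [hθ, div_le_iff₀ (by positivity : (0:ℝ) < 2*bU)]
    nlinarith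
  have hDa_nonneg : 0 ≤ hia - loa := by linarith
  have hDb_nonneg : 0 ≤ hib - lob := by linarith
  have hDa_le : hia - loa ≤ 432 * G := by
    have h1 : hia - loa ≤ (1-θ)*((1-θ)*(hia - loa) + 12*EPS) + 12*EPS := by
      have := mul_le_mul_of_nonneg_left hstepB (by linarith : (0:ℝ) ≤ 1-θ)
      linarith
    have h2 : θ * (hia - loa) ≤ 24 * EPS := by nlinarith
    have h3 : bL * (hia - loa) ≤ 48 * (bU * EPS) := by
      rw [hθ] at h2
      have h4 : bL/(2*bU) * (hia - loa) * (2*bU) = bL * (hia - loa) := by field_simp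
      nlinarith
    have h6' : bU * EPS = 9 * G * bL := by linarith [hEPSG]
    rw [h6'] at h3
    nlinarith
  have hDb_le : hib - lob ≤ 540 * G := by nlinarith
  have hss_pos := ss_pos hn hbL hbLU hM
  have hss_inv := ss_inv_le hn hbL hbLU hM
  have hss_inv_pos : (0:ℝ) ≤ 1/ss n M := by positivity
  -- CA : alpha entries away from j
  have hCA : ∀ i0 ∈ (Fa n).erase j, |(Mt n M)⁻¹ i0 j - 1/ss n M| ≤ 450 * G := by
    intro i0 hi0
    have hmd := mean_dev hn hbL hbLU hM j i0
    have habs : |(Mt n M)⁻¹ i0 j - 1/ss n M|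
        ≤ ∑ k ∈ Fa n, (aa n M k / ss n M) * |(Mt n M)⁻¹ i0 j - (Mt n M)⁻¹ k j| := by
      rw [hmd]
      calc |∑ k ∈ Fa n, (aa n M k / ss n M) * ((Mt n M)⁻¹ i0 j - (Mt n M)⁻¹ k j)|
          ≤ ∑ k ∈ Fa n, |(aa n M k / ss n M) * ((Mt n M)⁻¹ i0 j - (Mt n M)⁻¹ k j)| :=
            Finset.abs_sum_le_sum_abs _ _
        _ = ∑ k ∈ Fa n, (aa n M k / ss n M) * |(Mt n M)⁻¹ i0 j - (Mt n M)⁻¹ k j| := by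
            apply Finset.sum_congr rfl
            intro k hk
            rw [abs_mul, abs_of_nonneg]
            exact div_nonneg (by linarith [(aa_mem hn hbL hbLU hM (mem_Fa.1 hk)).1])
              (le_of_lt hss_pos)
    have hterm : ∀ k ∈ (Fa n).erase j,
        (aa n M k / ss n M) * |(Mt n M)⁻¹ i0 j - (Mt n M)⁻¹ k j|
          ≤ (aa n M k / ss n M) * (hia - loa) := by
      intro k hk
      have h1 := (hrange_a i0 hi0).1
      have h2 := (hrange_a i0 hi0).2
      have h3 := (hrange_a k hk).1
      have h4 := (hrange_a k hk).2
      have habsd : |(Mt n M)⁻¹ i0 j - (Mt n M)⁻¹ k j| ≤ hia - loa := by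
        rw [abs_le]
        constructor <;> linarith
      exact mul_le_mul_of_nonneg_left habsd (div_nonneg
        (by linarith [(aa_mem hn hbL hbLU hM (mem_Fa.1 (Finset.mem_erase.1 hk).2)).1])
        (le_of_lt hss_pos))
    have hsumfrac : ∑ k ∈ (Fa n).erase j, (aa n M k / ss n M) ≤ 1 := by
      have hsub : (Fa n).erase j ⊆ Fa n := Finset.erase_subset _ _
      have h1 : ∑ k ∈ (Fa n).erase j, (aa n M k / ss n M)
          ≤ ∑ k ∈ Fa n, (aa n M k / ss n M) := by
        apply Finset.sum_le_sum_of_subset_of_nonneg hsub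
        intro k hk _
        exact div_nonneg (by linarith [(aa_mem hn hbL hbLU hM (mem_Fa.1 hk)).1])
          (le_of_lt hss_pos)
      have h2 : ∑ k ∈ Fa n, (aa n M k / ss n M) = 1 := by
        rw [← Finset.sum_div, ← ss]
        exact div_self (ne_of_gt hss_pos)
      linarith
    have hsum_erase : ∑ k ∈ (Fa n).erase j,
        (aa n M k / ss n M) * |(Mt n M)⁻¹ i0 j - (Mt n M)⁻¹ k j| ≤ hia - loa := by
      calc ∑ k ∈ (Fa n).erase j, (aa n M k / ss n M) * |(Mt n M)⁻¹ i0 j - (Mt n M)⁻¹ k j|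
          ≤ ∑ k ∈ (Fa n).erase j, (aa n M k / ss n M) * (hia - loa) :=
            Finset.sum_le_sum hterm
        _ = (∑ k ∈ (Fa n).erase j, (aa n M k / ss n M)) * (hia - loa) := by
            rw [Finset.sum_mul]
        _ ≤ 1 * (hia - loa) := mul_le_mul_of_nonneg_right hsumfrac hDa_nonneg
        _ = hia - loa := one_mul _
    by_cases hjFa : j ∈ Fa n
    · have hsplit : ∑ k ∈ Fa n, (aa n M k / ss n M) * |(Mt n M)⁻¹ i0 j - (Mt n M)⁻¹ k j|
          = (∑ k ∈ (Fa n).erase j, (aa n M k / ss n M) * |(Mt n M)⁻¹ i0 j - (Mt n M)⁻¹ k j|)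
            + (aa n M j / ss n M) * |(Mt n M)⁻¹ i0 j - (Mt n M)⁻¹ j j| :=
        (Finset.sum_erase_add (Fa n) _ hjFa).symm
      have hjterm : (aa n M j / ss n M) * |(Mt n M)⁻¹ i0 j - (Mt n M)⁻¹ j j|
          ≤ (bU/((n:ℝ)*bL)) * (2*KB) := by
        apply mul_le_mul
        · rw [div_le_div_iff₀ hss_pos hnbL]
          have ha1 := (aa_mem hn hbL hbLU hM (mem_Fa.1 hjFa)).2
          have ha2 := ss_ge hn hbL hbLU hM
          have ha0 := (aa_mem hn hbL hbLU hM (mem_Fa.1 hjFa)).1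
          nlinarith
        · calc |(Mt n M)⁻¹ i0 j - (Mt n M)⁻¹ j j|
              ≤ |(Mt n M)⁻¹ i0 j| + |(Mt n M)⁻¹ j j| := abs_sub _ _
            _ ≤ KB + KB := add_le_add (hKb i0 j) (hKb j j)
            _ = 2*KB := by ring
        · exact abs_nonneg _
        · positivity
      have he2 : (bU/((n:ℝ)*bL)) * (2*KB) = 2*EPS := by
        rw [hKB, hEPS]
        field_simp
      have h2eps : 2*EPS ≤ 18*G := by linarith
      calc |(Mt n M)⁻¹ i0 j - 1/ss n M|
          ≤ ∑ k ∈ Fa n, (aa n M k / ss n M) * |(Mt n M)⁻¹ i0 j - (Mt n M)⁻¹ k j| := habs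
        _ = _ + _ := hsplit
        _ ≤ (hia - loa) + (bU/((n:ℝ)*bL)) * (2*KB) := add_le_add hsum_erase hjterm
        _ = (hia - loa) + 2*EPS := by rw [he2]
        _ ≤ 432*G + 18*G := add_le_add hDa_le h2eps
        _ = 450*G := by ring
    · have herase : (Fa n).erase j = Fa n := Finset.erase_eq_of_notMem hjFa
      calc |(Mt n M)⁻¹ i0 j - 1/ss n M|
          ≤ ∑ k ∈ Fa n, (aa n M k / ss n M) * |(Mt n M)⁻¹ i0 j - (Mt n M)⁻¹ k j| := habs
        _ = ∑ k ∈ (Fa n).erase j, (aa n M k / ss n M) * |(Mt n M)⁻¹ i0 j - (Mt n M)⁻¹ k j| := by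
            rw [herase]
        _ ≤ hia - loa := hsum_erase
        _ ≤ 432*G := hDa_le
        _ ≤ 450*G := by linarith
  -- CB : beta entries away from j
  have hCB : ∀ m0 ∈ (Fb n).erase j, |(Mt n M)⁻¹ m0 j - 1/ss n M| ≤ 470 * G := by
    intro m0 hm0
    obtain ⟨hm0ne, hm0Fb⟩ := Finset.mem_erase.1 hm0
    have hm0b : n ≤ (m0:ℕ) := mem_Fb.1 hm0Fb
    have hcol : (Mt n M)⁻¹ m0 j = ∑ k ∈ Fa n, (M k m0 / M m0 m0) * (Mt n M)⁻¹ k j := by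
      have h := col_eq_b hn hbL hbLU hM hm0b j
      rw [if_neg hm0ne] at h
      rw [h, zero_add]
    have hstoch := stoch_b hn hbL hbLU hM hm0b
    have hdev : (Mt n M)⁻¹ m0 j - 1/ss n M
        = ∑ k ∈ Fa n, (M k m0 / M m0 m0) * ((Mt n M)⁻¹ k j - 1/ss n M) := by
      have e1 : ∀ k ∈ Fa n, (M k m0 / M m0 m0) * ((Mt n M)⁻¹ k j - 1/ss n M)
          = (M k m0 / M m0 m0) * (Mt n M)⁻¹ k j - (M k m0 / M m0 m0) * (1/ss n M) :=
        fun k _ => by ring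
      rw [Finset.sum_congr rfl e1, Finset.sum_sub_distrib, ← Finset.sum_mul, hstoch, ← hcol]
      ring
    have habs : |(Mt n M)⁻¹ m0 j - 1/ss n M|
        ≤ ∑ k ∈ Fa n, (M k m0 / M m0 m0) * |(Mt n M)⁻¹ k j - 1/ss n M| := by
      rw [hdev]
      calc |∑ k ∈ Fa n, (M k m0 / M m0 m0) * ((Mt n M)⁻¹ k j - 1/ss n M)|
          ≤ ∑ k ∈ Fa n, |(M k m0 / M m0 m0) * ((Mt n M)⁻¹ k j - 1/ss n M)| :=
            Finset.abs_sum_le_sum_abs _ _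
        _ = ∑ k ∈ Fa n, (M k m0 / M m0 m0) * |(Mt n M)⁻¹ k j - 1/ss n M| := by
            apply Finset.sum_congr rfl
            intro k _
            rw [abs_mul, abs_of_nonneg (div_nonneg (hM.2.1 k m0)
              (le_of_lt (diag_pos hn hbL hbLU hM)))]
    have hterm : ∀ k ∈ (Fa n).erase j,
        (M k m0 / M m0 m0) * |(Mt n M)⁻¹ k j - 1/ss n M|
          ≤ (M k m0 / M m0 m0) * (450*G) := by
      intro k hk
      exact mul_le_mul_of_nonneg_left (hCA k hk)
        (div_nonneg (hM.2.1 k m0) (le_of_lt (diag_pos hn hbL hbLU hM)))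
    have hsumfrac : ∑ k ∈ (Fa n).erase j, (M k m0 / M m0 m0) ≤ 1 := by
      have h1 : ∑ k ∈ (Fa n).erase j, (M k m0 / M m0 m0)
          ≤ ∑ k ∈ Fa n, (M k m0 / M m0 m0) := by
        apply Finset.sum_le_sum_of_subset_of_nonneg (Finset.erase_subset _ _)
        intro k _ _
        exact div_nonneg (hM.2.1 k m0) (le_of_lt (diag_pos hn hbL hbLU hM))
      linarith [hstoch]
    have hsum_erase : ∑ k ∈ (Fa n).erase j,
        (M k m0 / M m0 m0) * |(Mt n M)⁻¹ k j - 1/ss n M| ≤ 450*G := by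
      calc ∑ k ∈ (Fa n).erase j, (M k m0 / M m0 m0) * |(Mt n M)⁻¹ k j - 1/ss n M|
          ≤ ∑ k ∈ (Fa n).erase j, (M k m0 / M m0 m0) * (450*G) := Finset.sum_le_sum hterm
        _ = (∑ k ∈ (Fa n).erase j, (M k m0 / M m0 m0)) * (450*G) := by rw [Finset.sum_mul]
        _ ≤ 1 * (450*G) := mul_le_mul_of_nonneg_right hsumfrac (by positivity)
        _ = 450*G := one_mul _
    by_cases hjFa : j ∈ Fa n
    · have hsplit : ∑ k ∈ Fa n, (M k m0 / M m0 m0) * |(Mt n M)⁻¹ k j - 1/ss n M|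
          = (∑ k ∈ (Fa n).erase j, (M k m0 / M m0 m0) * |(Mt n M)⁻¹ k j - 1/ss n M|)
            + (M j m0 / M m0 m0) * |(Mt n M)⁻¹ j j - 1/ss n M| :=
        (Finset.sum_erase_add (Fa n) _ hjFa).symm
      have hjterm : (M j m0 / M m0 m0) * |(Mt n M)⁻¹ j j - 1/ss n M|
          ≤ (2*bU/((n:ℝ)*bL)) * (KB + 1/((n:ℝ)*bL)) := by
        apply mul_le_mul
        · exact frac_le_b hn hbL hbLU hM (mem_Fa.1 hjFa) hm0b
        · calc |(Mt n M)⁻¹ j j - 1/ss n M|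
              ≤ |(Mt n M)⁻¹ j j| + |1/ss n M| := abs_sub _ _
            _ ≤ KB + 1/((n:ℝ)*bL) := by
                apply add_le_add (hKb j j)
                rw [abs_of_nonneg hss_inv_pos]
                exact hss_inv
        · exact abs_nonneg _
        · positivity
      have he3 : (2*bU/((n:ℝ)*bL)) * (KB + 1/((n:ℝ)*bL)) = (20/9)*EPS := by
        rw [hKB, hEPS]
        field_simp
        ring
      have h20eps : (20/9)*EPS ≤ 20*G := by linarith
      calc |(Mt n M)⁻¹ m0 j - 1/ss n M|
          ≤ ∑ k ∈ Fa n, (M k m0 / M m0 m0) * |(Mt n M)⁻¹ k j - 1/ss n M| := habs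
        _ = _ + _ := hsplit
        _ ≤ 450*G + (2*bU/((n:ℝ)*bL)) * (KB + 1/((n:ℝ)*bL)) := add_le_add hsum_erase hjterm
        _ = 450*G + (20/9)*EPS := by rw [he3]
        _ ≤ 450*G + 20*G := by linarith
        _ = 470*G := by ring
    · have herase : (Fa n).erase j = Fa n := Finset.erase_eq_of_notMem hjFa
      calc |(Mt n M)⁻¹ m0 j - 1/ss n M|
          ≤ ∑ k ∈ Fa n, (M k m0 / M m0 m0) * |(Mt n M)⁻¹ k j - 1/ss n M| := habs
        _ = ∑ k ∈ (Fa n).erase j, (M k m0 / M m0 m0) * |(Mt n M)⁻¹ k j - 1/ss n M| := by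
            rw [herase]
        _ ≤ 450*G := hsum_erase
        _ ≤ 470*G := by linarith
  -- final case analysis
  by_cases hij : i = j
  · rw [if_pos hij]
    subst hij
    by_cases hiFa : (i:ℕ) < n
    · -- diagonal in alpha block
      have hcol := col_eq_a hn hbL hbLU hM hiFa i
      rw [if_pos rfl] at hcol
      have hstoch := stoch_a hn hbL hbLU hM hiFa
      have hPdev : ∑ m ∈ Fb n, (M i m / rr n M i) * ((Mt n M)⁻¹ m i - 1/ss n M)
          = (∑ m ∈ Fb n, (M i m / rr n M i) * (Mt n M)⁻¹ m i) - 1/ss n M := by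
        have e1 : ∀ m ∈ Fb n, (M i m / rr n M i) * ((Mt n M)⁻¹ m i - 1/ss n M)
            = (M i m / rr n M i) * (Mt n M)⁻¹ m i - (M i m / rr n M i) * (1/ss n M) :=
          fun m _ => by ring
        rw [Finset.sum_congr rfl e1, Finset.sum_sub_distrib, ← Finset.sum_mul, hstoch]
        ring
      have hPbound : |∑ m ∈ Fb n, (M i m / rr n M i) * ((Mt n M)⁻¹ m i - 1/ss n M)|
          ≤ 470*G := by
        apply convex_est
        · intro m _
          exact div_nonneg (hM.2.1 i m) (le_of_lt (rr_pos hn hbL hbLU hM hiFa))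
        · exact hstoch
        · intro m hm
          apply hCB
          apply Finset.mem_erase.2
          refine ⟨?_, hm⟩
          intro hc
          rw [hc] at hm
          have := mem_Fb.1 hm
          omega
      have hPabs : |∑ m ∈ Fb n, (M i m / rr n M i) * (Mt n M)⁻¹ m i| ≤ KB := by
        apply convex_est
        · intro m _
          exact div_nonneg (hM.2.1 i m) (le_of_lt (rr_pos hn hbL hbLU hM hiFa))
        · exact hstoch
        · intro m _
          exact hKb m i
      have hkap1 := kappa_nonneg hn hbL hbLU hM hiFa
      have hkap2 := kappa_le hn hbL hbLU hM hiFa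
      have hfin : (Mt n M)⁻¹ i i - 1/M i i - 1/ss n M
          = (∑ m ∈ Fb n, (M i m / rr n M i) * ((Mt n M)⁻¹ m i - 1/ss n M))
            - (aa n M i / M i i) * ∑ m ∈ Fb n, (M i m / rr n M i) * (Mt n M)⁻¹ m i := by
        rw [hcol, hPdev]
        ring
      have hkapterm : |(aa n M i / M i i) * ∑ m ∈ Fb n, (M i m / rr n M i) * (Mt n M)⁻¹ m i|
          ≤ (2*bU/((n:ℝ)*bL)) * KB := by
        rw [abs_mul]
        apply mul_le_mul
        · rw [abs_of_nonneg hkap1]; exact hkap2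
        · exact hPabs
        · exact abs_nonneg _
        · positivity
      have he4 : (2*bU/((n:ℝ)*bL)) * KB = 2*EPS := by
        rw [hKB, hEPS]
        field_simp
      calc |(Mt n M)⁻¹ i i - 1/M i i - 1/ss n M|
          ≤ |∑ m ∈ Fb n, (M i m / rr n M i) * ((Mt n M)⁻¹ m i - 1/ss n M)|
            + |(aa n M i / M i i) * ∑ m ∈ Fb n, (M i m / rr n M i) * (Mt n M)⁻¹ m i| := by
            rw [hfin]; exact abs_sub _ _
        _ ≤ 470*G + (2*bU/((n:ℝ)*bL)) * KB := add_le_add hPbound hkapterm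
        _ = 470*G + 2*EPS := by rw [he4]
        _ ≤ 470*G + 18*G := by linarith
        _ ≤ 700 * (bU^2 / (bL^3 * (n:ℝ)^2)) := by rw [← hG]; linarith
    · -- diagonal in beta block
      have hib' : n ≤ (i:ℕ) := not_lt.1 hiFa
      have hcol := col_eq_b hn hbL hbLU hM hib' i
      rw [if_pos rfl] at hcol
      have hstoch := stoch_b hn hbL hbLU hM hib'
      have hdev : (Mt n M)⁻¹ i i - 1/M i i - 1/ss n M
          = ∑ k ∈ Fa n, (M k i / M i i) * ((Mt n M)⁻¹ k i - 1/ss n M) := by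
        have e1 : ∀ k ∈ Fa n, (M k i / M i i) * ((Mt n M)⁻¹ k i - 1/ss n M)
            = (M k i / M i i) * (Mt n M)⁻¹ k i - (M k i / M i i) * (1/ss n M) :=
          fun k _ => by ring
        rw [Finset.sum_congr rfl e1, Finset.sum_sub_distrib, ← Finset.sum_mul, hstoch, hcol]
        ring
      have hbound : |∑ k ∈ Fa n, (M k i / M i i) * ((Mt n M)⁻¹ k i - 1/ss n M)| ≤ 450*G := by
        apply convex_est
        · intro k _
          exact div_nonneg (hM.2.1 k i) (le_of_lt (diag_pos hn hbL hbLU hM))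
        · exact hstoch
        · intro k hk
          apply hCA
          apply Finset.mem_erase.2
          refine ⟨?_, hk⟩
          intro hc
          rw [hc] at hk
          have := mem_Fa.1 hk
          omega
      rw [hdev] at *
      calc |∑ k ∈ Fa n, (M k i / M i i) * ((Mt n M)⁻¹ k i - 1/ss n M)| ≤ 450*G := hbound
        _ ≤ 700 * (bU^2 / (bL^3 * (n:ℝ)^2)) := by rw [← hG]; linarith
  · rw [if_neg hij]
    by_cases hiFa : (i:ℕ) < n
    · have h := hCA i (Finset.mem_erase.2 ⟨hij, mem_Fa.2 hiFa⟩)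
      calc |(Mt n M)⁻¹ i j - 0 - 1/ss n M| = |(Mt n M)⁻¹ i j - 1/ss n M| := by ring_nf
        _ ≤ 450*G := h
        _ ≤ 700 * (bU^2 / (bL^3 * (n:ℝ)^2)) := by rw [← hG]; linarith
    · have h := hCB i (Finset.mem_erase.2 ⟨hij, mem_Fb.2 (not_lt.1 hiFa)⟩)
      calc |(Mt n M)⁻¹ i j - 0 - 1/ss n M| = |(Mt n M)⁻¹ i j - 1/ss n M| := by ring_nf
        _ ≤ 470*G := h
        _ ≤ 700 * (bU^2 / (bL^3 * (n:ℝ)^2)) := by rw [← hG]; linarith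

omit hbL hbLU hM in
lemma sg_sq (i : Fin (2*n-1)) : sg n i * sg n i = 1 := by
  simp only [sg]
  split_ifs <;> ring

omit hbL hbLU hM in
lemma sigma_mul_sigma : (Matrix.diagonal (sg n)) * (Matrix.diagonal (sg n))
    = (1 : Matrix (Fin (2*n-1)) (Fin (2*n-1)) ℝ) := by
  rw [Matrix.diagonal_mul_diagonal]
  have : (fun i => sg n i * sg n i) = fun _ : Fin (2*n-1) => (1:ℝ) := by
    funext i
    exact sg_sq hn i
  rw [this, Matrix.diagonal_one]

omit hbL hbLU hM in
lemma M_decomp : M = (Matrix.diagonal (sg n)) * (Mt n M) * (Matrix.diagonal (sg n)) := by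
  ext i k
  have h1 : ((Matrix.diagonal (sg n)) * (Mt n M) * (Matrix.diagonal (sg n))) i k
      = sg n i * (Mt n M i k) * sg n k := by
    rw [Matrix.mul_diagonal, Matrix.diagonal_mul]
  rw [h1]
  show M i k = sg n i * (sg n i * sg n k * M i k) * sg n k
  have s1 := sg_sq hn (n := n) i
  have s2 := sg_sq hn (n := n) k
  linear_combination (- M i k * (sg n k * sg n k)) * s1 - M i k * s2

omit hbL hbLU hM in
lemma sigma_inv : (Matrix.diagonal (sg n))⁻¹ = Matrix.diagonal (sg n) :=
  Matrix.inv_eq_right_inv (sigma_mul_sigma hn)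

lemma Minv_entry (i j : Fin (2*n-1)) :
    M⁻¹ i j = sg n i * ((Mt n M)⁻¹ i j) * sg n j := by
  have hd : M⁻¹ = (Matrix.diagonal (sg n)) * (Mt n M)⁻¹ * (Matrix.diagonal (sg n)) := by
    conv_lhs => rw [M_decomp hn (M := M)]
    rw [Matrix.mul_inv_rev, Matrix.mul_inv_rev, sigma_inv hn]
    rw [Matrix.mul_assoc]
  rw [hd, Matrix.mul_diagonal, Matrix.diagonal_mul]

lemma approxS_entry (i j : Fin (2*n-1)) :
    approxS n M i j = sg n i * ((if i = j then 1/M i i else 0) + 1/ss n M) * sg n j := by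
  have hm22 := m22_eq hn hbL hbLU hM
  show (if ((i : ℕ) < n ∧ (j : ℕ) < n) ∨ (n ≤ (i : ℕ) ∧ n ≤ (j : ℕ)) then
      (if i = j then 1 / M i i else 0)
        + 1 / (∑ k, (M k k - ∑ l ∈ univ.filter (· ≠ k), M k l))
    else -(1 / (∑ k, (M k k - ∑ l ∈ univ.filter (· ≠ k), M k l)))) = _
  rw [hm22]
  by_cases hc : ((i : ℕ) < n ∧ (j : ℕ) < n) ∨ (n ≤ (i : ℕ) ∧ n ≤ (j : ℕ))
  · rw [if_pos hc]
    rcases hc with ⟨h1, h2⟩ | ⟨h1, h2⟩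
    · rw [sg_a h1, sg_a h2]; ring
    · rw [sg_b h1, sg_b h2]; ring
  · rw [if_neg hc]
    push_neg at hc
    obtain ⟨hc1, hc2⟩ := hc
    rcases lt_or_ge ((i:ℕ)) n with h1 | h1
    · have h2 : n ≤ (j:ℕ) := by
        have := hc1 h1
        omega
      have hij : i ≠ j := by
        intro h
        rw [h] at h1
        omega
      rw [sg_a h1, sg_b h2, if_neg hij]
      ring
    · have h2 : (j:ℕ) < n := by
        have := hc2 h1
        omega
      have hij : i ≠ j := by
        intro h
        rw [h] at h1
        omega
      rw [sg_b h1, sg_a h2, if_neg hij]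
      ring

omit hn hbL hbLU hM in
lemma sg_abs (a : Fin (2*n-1)) : |sg n a| = 1 := by
  simp only [sg]
  split_ifs <;> simp

lemma entry_bound (i j : Fin (2*n-1)) :
    |(M⁻¹ - approxS n M) i j| ≤ 700 * bU^2 / (bL^3 * ((n:ℝ)-1)^2) := by
  have h6 := nreal6 hn hbL hbLU hM
  have hbU : 0 < bU := lt_of_lt_of_le hbL hbLU
  have hcore := core_est hn hbL hbLU hM j i
  have he : (M⁻¹ - approxS n M) i j
      = sg n i * ((Mt n M)⁻¹ i j - (if i = j then 1/M i i else 0) - 1/ss n M) * sg n j := by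
    rw [Matrix.sub_apply, Minv_entry hn hbL hbLU hM, approxS_entry hn hbL hbLU hM]
    ring
  rw [he, abs_mul, abs_mul, sg_abs (n := n) i, sg_abs (n := n) j, one_mul, mul_one]
  refine le_trans hcore ?_
  rw [mul_div_assoc]
  apply mul_le_mul_of_nonneg_left _ (by norm_num : (0:ℝ) ≤ 700)
  have hb3 : (0:ℝ) < bL^3 := by positivity
  have hx1 : (0:ℝ) < bL^3 * (n:ℝ)^2 := mul_pos hb3 (by nlinarith)
  have hx2 : (0:ℝ) < bL^3 * ((n:ℝ)-1)^2 := mul_pos hb3 (by nlinarith)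
  rw [div_le_div_iff₀ hx1 hx2]
  nlinarith [sq_nonneg bU, mul_pos hb3 (by nlinarith : (0:ℝ) < (n:ℝ)-1)]

end basic
end YLZ

/-- Proposition 1 of Yan, Leng and Zhu (2016): for `M ∈ L_n(b_L, b_U)` with `b_U/b_L = o(n)`,
for all large `n` the entrywise error between `M⁻¹` and `S(M)` is at most
`c₁ b_U² / (b_L³ (n-1)²)` for an absolute constant `c₁`. -/
theorem approx_inverse_error (bL bU : ℕ → ℝ)
    (M : (n : ℕ) → Matrix (Fin (2 * n - 1)) (Fin (2 * n - 1)) ℝ)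
    (hpos : ∀ n, 0 < bL n ∧ bL n ≤ bU n)
    (hmem : ∀ n, memL n (bL n) (bU n) (M n))
    (hsmall : Tendsto (fun n : ℕ => bU n / bL n / n) atTop (nhds 0)) :
    ∃ c₁ : ℝ, 0 < c₁ ∧ ∀ᶠ n : ℕ in atTop, ∀ i j,
      |((M n)⁻¹ - approxS n (M n)) i j| ≤ c₁ * (bU n) ^ 2 / ((bL n) ^ 3 * ((n : ℝ) - 1) ^ 2) := by
  refine ⟨700, by norm_num, ?_⟩
  filter_upwards [Filter.eventually_ge_atTop 6] with n hn6
  intro i j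
  exact YLZ.entry_bound hn6 (hpos n).1 (hpos n).2 (hmem n) i j
end

section
/- Let F: D → ℝⁿ be Fréchet differentiable on an open convex set D ⊆ ℝⁿ. Suppose at some x₀ ∈ D the derivative F'(x₀) is invertible, ‖F'(x₀)^{-1}(F'(x) - F'(y))‖ ≤ K‖x - y‖ for all x, y ∈ D, ‖F'(x₀)^{-1} F(x₀)‖ ≤ η, and h := Kη ≤ 1/2, and that the closed ball B̄(x₀, t*) ⊆ D where t* = 2η/(1 + √(1-2h)). Then the Newton iterates x_{k+1} = x_k - F'(x_k)^{-1} F(x_k) are well-defined, remain in B̄(x₀, t*), and converge to a solution x* of F(x) = 0 with ‖x* - x₀‖ ≤ t* and ‖x* - x_k‖ ≤ 2^{1-k}(2h)^{2^k - 1} η for k ≥ 1. -/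
open Filter

namespace Kantorovich

noncomputable def kS (K η : ℝ) : ℝ := Real.sqrt (1 - 2 * (K * η))

noncomputable def kU (K η : ℝ) : ℕ → ℝ
  | 0 => 1
  | k + 1 => (kU K η k ^ 2 + (1 - 2 * (K * η))) / (2 * kU K η k)

noncomputable def kE (K η : ℝ) : ℕ → ℝ
  | 0 => 2 * η / (1 + kS K η)
  | k + 1 => K * kE K η k ^ 2 / (2 * kU K η k)

variable {K η : ℝ} (hK : 0 ≤ K) (hη : 0 ≤ η) (hh : K * η ≤ 1 / 2)

section
include hK hη hh

lemma hs0 : 0 ≤ kS K η := Real.sqrt_nonneg _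

lemma hsq : kS K η ^ 2 = 1 - 2 * (K * η) := Real.sq_sqrt (by linarith)

lemma hs1 : kS K η ≤ 1 := by
  nlinarith [hsq hK hη hh, hs0 (K := K) (η := η) hK hη hh]

lemma hKt : K * kE K η 0 = 1 - kS K η := by
  have h0 := hs0 hK hη hh
  have h1 := hsq hK hη hh
  show K * (2 * η / (1 + kS K η)) = 1 - kS K η
  have hne : (1 + kS K η) ≠ 0 := by linarith
  field_simp
  nlinarith [h1]

lemma kE0_nonneg : 0 ≤ kE K η 0 := by
  have h0 := hs0 hK hη hh
  exact div_nonneg (by linarith) (by linarith)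

/-- main conjunction -/
lemma kMain : ∀ k : ℕ, kU K η k = kS K η + K * kE K η k ∧ kS K η ≤ kU K η k ∧
    kU K η k ≤ 1 ∧ ((2:ℝ)⁻¹) ^ k ≤ kU K η k ∧ 0 ≤ kE K η k := by
  have h0 := hs0 hK hη hh
  have h1 := hs1 hK hη hh
  have hq := hsq hK hη hh
  have ht := hKt hK hη hh
  intro k
  induction k with
  | zero =>
    refine ⟨by simp [kU]; linarith, by simp [kU]; linarith, by simp [kU], by simp [kU],
      kE0_nonneg hK hη hh⟩
  | succ k ih =>
    obtain ⟨hinv, hsu, hu1, hpu, he⟩ := ih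
    have hupos : 0 < kU K η k := lt_of_lt_of_le (by positivity) hpu
    have hEU : kU K η (k+1) = (kU K η k ^ 2 + (1 - 2*(K*η))) / (2 * kU K η k) := rfl
    have hEE : kE K η (k+1) = K * kE K η k ^ 2 / (2 * kU K η k) := rfl
    refine ⟨?_, ?_, ?_, ?_, ?_⟩
    · have hne2 : kS K η + K * kE K η k ≠ 0 := by rw [← hinv]; exact hupos.ne'
      rw [hEU, hEE, hinv, ← hq]
      field_simp
      ring
    · rw [hEU, le_div_iff₀ (by positivity)]
      nlinarith [sq_nonneg (kU K η k - kS K η), hq]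
    · rw [hEU, div_le_one (by positivity)]
      nlinarith [hq]
    · rw [hEU, le_div_iff₀ (by positivity)]
      have : (2:ℝ)⁻¹ ^ (k+1) = (2:ℝ)⁻¹ ^ k * 2⁻¹ := pow_succ _ _
      nlinarith [hq, sq_nonneg (kU K η k)]
    · rw [hEE]
      positivity


lemma kE_antitone : ∀ k, kE K η (k+1) ≤ kE K η k := by
  intro k
  obtain ⟨hinv, hsu, hu1, hpu, he⟩ := kMain hK hη hh k
  have h0 := hs0 hK hη hh
  have hupos : 0 < kU K η k := lt_of_lt_of_le (by positivity) hpu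
  show K * kE K η k ^ 2 / (2 * kU K η k) ≤ kE K η k
  rw [div_le_iff₀ (by positivity)]
  nlinarith

lemma kE_le_kE0 : ∀ k, kE K η k ≤ kE K η 0 := by
  intro k
  induction k with
  | zero => exact le_refl _
  | succ k ih => exact le_trans (kE_antitone hK hη hh k) ih

lemma kE_bound : ∀ k, kE K η k ≤ 2 * ((2:ℝ)⁻¹) ^ k * (2*(K*η)) ^ (2^k - 1) * η := by
  intro k
  induction k with
  | zero =>
    have h0 := hs0 hK hη hh
    show 2 * η / (1 + kS K η) ≤ _
    simp only [pow_zero, Nat.sub_self, mul_one, one_mul]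
    rw [div_le_iff₀ (by linarith : (0:ℝ) < 1 + kS K η)]
    nlinarith
  | succ k ih =>
    obtain ⟨hinv, hsu, hu1, hpu, he⟩ := kMain hK hη hh k
    have hupos : 0 < kU K η k := lt_of_lt_of_le (by positivity) hpu
    have hexp : 2^(k+1) - 1 = (2^k - 1) + (2^k - 1) + 1 := by
      have h1 : 1 ≤ 2^k := Nat.one_le_two_pow
      omega
    calc kE K η (k+1) = K * kE K η k ^ 2 / (2 * kU K η k) := rfl
      _ ≤ K * (2 * ((2:ℝ)⁻¹) ^ k * (2*(K*η)) ^ (2^k - 1) * η) ^ 2 / (2 * ((2:ℝ)⁻¹) ^ k) := by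
          gcongr
          all_goals first | positivity | exact he
      _ = 2 * ((2:ℝ)⁻¹) ^ (k+1) * (2*(K*η)) ^ (2^(k+1) - 1) * η := by
          rw [hexp, pow_add, pow_add, pow_one, pow_succ]
          have : ((2:ℝ)⁻¹) ^ k ≠ 0 := by positivity
          field_simp
          ring


lemma kU_pos : ∀ k, 0 < kU K η k := fun k =>
  lt_of_lt_of_le (by positivity) (kMain hK hη hh k).2.2.2.1

lemma kE_nonneg : ∀ k, 0 ≤ kE K η k := fun k => (kMain hK hη hh k).2.2.2.2

lemma q0_eq : kE K η 0 * (kS K η + K * kE K η 0 / 2) = η := by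
  have h0 := hs0 hK hη hh
  have ht := hKt hK hη hh
  have he0s : kE K η 0 * (1 + kS K η) = 2 * η := by
    rw [show kE K η 0 = 2 * η / (1 + kS K η) from rfl]
    field_simp
  linear_combination (kE K η 0 / 2) * ht + (1 / 2) * he0s

lemma delta_eq : ∀ k, (kU K η k)⁻¹ * (kE K η k * (kS K η + K * kE K η k / 2))
    = kE K η k - kE K η (k + 1) := by
  intro k
  obtain ⟨hinv, hsu, hu1, hpu, he⟩ := kMain hK hη hh k
  have hupos := kU_pos hK hη hh k
  have hne : kU K η k ≠ 0 := hupos.ne'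
  have hne2 : kS K η + K * kE K η k ≠ 0 := by rw [← hinv]; exact hne
  rw [show kE K η (k+1) = K * kE K η k ^ 2 / (2 * kU K η k) from rfl, hinv]
  field_simp
  ring

lemma quad_eq : ∀ k, K / 2 * (kE K η k - kE K η (k + 1)) ^ 2
    = kE K η (k + 1) * (kS K η + K * kE K η (k + 1) / 2) := by
  intro k
  obtain ⟨hinv, hsu, hu1, hpu, he⟩ := kMain hK hη hh k
  have hupos := kU_pos hK hη hh k
  have hne : kU K η k ≠ 0 := hupos.ne'
  have hne2 : kS K η + K * kE K η k ≠ 0 := by rw [← hinv]; exact hne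
  rw [show kE K η (k+1) = K * kE K η k ^ 2 / (2 * kU K η k) from rfl, hinv]
  field_simp
  ring

lemma Ku_eq : ∀ k, K * (kE K η 0 - kE K η k) = 1 - kU K η k := by
  intro k
  obtain ⟨hinv, _, _, _, _⟩ := kMain hK hη hh k
  have ht := hKt hK hη hh
  linear_combination ht + hinv

end

lemma taylor_bound {E : Type*} [NormedAddCommGroup E] [NormedSpace ℝ E]
    {D : Set E} (hconv : Convex ℝ D)
    {f : E → E} {f' : E → E →L[ℝ] E} (hf : ∀ z ∈ D, HasFDerivAt f (f' z) z)
    {Kc : ℝ} {x y : E} (hx : x ∈ D) (hy : y ∈ D)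
    (hLip : ∀ z ∈ D, ‖f' z - f' x‖ ≤ Kc * ‖z - x‖) :
    ‖f y - f x - f' x (y - x)‖ ≤ Kc / 2 * ‖y - x‖ ^ 2 := by
  set v := y - x with hv
  have hmem : ∀ t : ℝ, t ∈ Set.Icc (0:ℝ) 1 → x + t • v ∈ D := fun t ht =>
    hconv.add_smul_sub_mem hx hy ht
  set φ : ℝ → E := fun t => f (x + t • v) - f x - t • (f' x v) with hφ
  have hd : ∀ t ∈ Set.Icc (0:ℝ) 1,
      HasDerivAt φ ((f' (x + t • v) - f' x) v) t := by
    intro t ht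
    have hγ : HasDerivAt (fun t : ℝ => x + t • v) v t := by
      simpa using ((hasDerivAt_id t).smul_const v).const_add x
    have h1 : HasDerivAt (fun t : ℝ => f (x + t • v)) (f' (x + t • v) v) t :=
      (hf _ (hmem t ht)).comp_hasDerivAt t hγ
    have h2 : HasDerivAt (fun t : ℝ => f (x + t • v) - f x) (f' (x + t • v) v) t :=
      h1.sub_const (f x)
    have h3 : HasDerivAt (fun t : ℝ => t • (f' x v)) (f' x v) t := by
      simpa using (hasDerivAt_id t).smul_const (f' x v)
    exact (h2.sub h3).congr_deriv (by simp)
  have key : ∀ t ∈ Set.Icc (0:ℝ) 1, ‖φ t‖ ≤ Kc / 2 * t ^ 2 * ‖v‖ ^ 2 := by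
    intro t ht
    refine image_norm_le_of_norm_deriv_right_le_deriv_boundary (f := φ) (a := 0) (b := 1)
      (f' := fun t => (f' (x + t • v) - f' x) v)
      (B := fun t => Kc / 2 * t ^ 2 * ‖v‖ ^ 2)
      (B' := fun t => Kc * t * ‖v‖ ^ 2) ?_ ?_ ?_ ?_ ?_ ht
    · intro t ht
      exact (hd t ht).continuousAt.continuousWithinAt
    · intro t ht
      exact (hd t (Set.mem_Icc_of_Ico ht)).hasDerivWithinAt
    · simp [hφ]
    · intro t
      have : HasDerivAt (fun t : ℝ => Kc / 2 * t ^ 2 * ‖v‖ ^ 2) (Kc * t * ‖v‖ ^ 2) t := by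
        have h := ((hasDerivAt_pow 2 t).const_mul (Kc / 2)).mul_const (‖v‖ ^ 2)
        exact h.congr_deriv (by rw [show (2:ℕ) - 1 = 1 from rfl]; push_cast; ring)
      exact this
    · intro t ht
      obtain ⟨ht0, ht1⟩ := ht
      calc ‖(f' (x + t • v) - f' x) v‖ ≤ ‖f' (x + t • v) - f' x‖ * ‖v‖ :=
            ContinuousLinearMap.le_opNorm _ _
        _ ≤ (Kc * ‖(x + t • v) - x‖) * ‖v‖ := by
            apply mul_le_mul_of_nonneg_right _ (norm_nonneg _)
            exact hLip _ (hmem t ⟨ht0, le_of_lt ht1⟩)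
        _ = Kc * t * ‖v‖ ^ 2 := by
            rw [add_sub_cancel_left, norm_smul, Real.norm_eq_abs, abs_of_nonneg ht0]
            ring
  have h2 := key 1 (by norm_num)
  have h1 : x + v = y := by rw [hv]; abel
  simpa [hφ, h1] using h2

end Kantorovich

open Kantorovich in
/-- Kantorovich's theorem on Newton's method (Theorem 6 in Kantorovich–Akilov). -/
theorem kantorovich_newton {E : Type*} [NormedAddCommGroup E] [NormedSpace ℝ E]
    [CompleteSpace E]
    (D : Set E) (hD : IsOpen D) (hconv : Convex ℝ D)
    (F : E → E) (F' : E → E →L[ℝ] E)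
    (hF : ∀ x ∈ D, HasFDerivAt F (F' x) x)
    (x₀ : E) (hx₀ : x₀ ∈ D)
    (A : E ≃L[ℝ] E) (hA : (A : E →L[ℝ] E) = F' x₀)
    (K η : ℝ) (hK : 0 ≤ K) (hη : 0 ≤ η)
    (hLip : ∀ x ∈ D, ∀ y ∈ D,
      ‖(A.symm : E →L[ℝ] E).comp (F' x - F' y)‖ ≤ K * ‖x - y‖)
    (hstep : ‖A.symm (F x₀)‖ ≤ η)
    (hh : K * η ≤ 1 / 2)
    (hball : Metric.closedBall x₀ (2 * η / (1 + Real.sqrt (1 - 2 * (K * η)))) ⊆ D) :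
    ∃ x : ℕ → E, x 0 = x₀ ∧
      (∀ k : ℕ, x k ∈ Metric.closedBall x₀ (2 * η / (1 + Real.sqrt (1 - 2 * (K * η)))) ∧
        ∃ Ak : E ≃L[ℝ] E, (Ak : E →L[ℝ] E) = F' (x k) ∧
          x (k + 1) = x k - Ak.symm (F (x k))) ∧
      ∃ xs : E, Tendsto x atTop (nhds xs) ∧ F xs = 0 ∧
        ‖xs - x₀‖ ≤ 2 * η / (1 + Real.sqrt (1 - 2 * (K * η))) ∧
        ∀ k : ℕ, 1 ≤ k →
          ‖xs - x k‖ ≤ (2 : ℝ) ^ ((1 : ℤ) - (k : ℤ)) * (2 * (K * η)) ^ (2 ^ k - 1) * η := by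
  have hupos := Kantorovich.kU_pos hK hη hh
  have hen := Kantorovich.kE_nonneg hK hη hh
  have hanti : ∀ a b : ℕ, a ≤ b → kE K η b ≤ kE K η a := fun a b hab =>
    antitone_nat_of_succ_le (kE_antitone hK hη hh) hab
  have hr : 2 * η / (1 + Real.sqrt (1 - 2 * (K * η))) = kE K η 0 := rfl
  have hmemD : ∀ z : E, ‖z - x₀‖ ≤ kE K η 0 → z ∈ D := by
    intro z hz
    apply hball
    rw [Metric.mem_closedBall, dist_eq_norm, hr]
    exact hz
  set newt : E → E := fun y => y - Ring.inverse (F' y) (F y) with hnewt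
  set x : ℕ → E := fun k => newt^[k] x₀ with hxdef
  have hx0 : x 0 = x₀ := rfl
  have hxs : ∀ k, x (k + 1) = newt (x k) := fun k => Function.iterate_succ_apply' newt k x₀
  have derive : ∀ k, (‖x k - x₀‖ ≤ kE K η 0 - kE K η k ∧
      ‖A.symm (F (x k))‖ ≤ kE K η k * (kS K η + K * kE K η k / 2)) →
      ((∃ Ak : E ≃L[ℝ] E, (Ak : E →L[ℝ] E) = F' (x k) ∧
          x (k + 1) = x k - Ak.symm (F (x k))) ∧
        ‖x (k + 1) - x k‖ ≤ kE K η k - kE K η (k + 1) ∧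
        (‖x (k + 1) - x₀‖ ≤ kE K η 0 - kE K η (k + 1) ∧
          ‖A.symm (F (x (k + 1)))‖ ≤ kE K η (k + 1) * (kS K η + K * kE K η (k + 1) / 2))) := by
    rintro k ⟨h1, h2⟩
    have hxkD : x k ∈ D := hmemD _ (h1.trans (by linarith [hen k]))
    have hone : (A.symm : E →L[ℝ] E).comp (F' x₀) = 1 := by
      rw [← hA]; ext z; simp
    have htnorm : ‖(1 : E →L[ℝ] E) - (A.symm : E →L[ℝ] E).comp (F' (x k))‖ ≤ 1 - kU K η k := by
      rw [← hone, ← ContinuousLinearMap.comp_sub]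
      calc ‖(A.symm : E →L[ℝ] E).comp (F' x₀ - F' (x k))‖ ≤ K * ‖x₀ - x k‖ :=
            hLip x₀ hx₀ (x k) hxkD
        _ = K * ‖x k - x₀‖ := by rw [norm_sub_rev]
        _ ≤ K * (kE K η 0 - kE K η k) := mul_le_mul_of_nonneg_left h1 hK
        _ = 1 - kU K η k := Kantorovich.Ku_eq hK hη hh k
    have htlt : ‖(1 : E →L[ℝ] E) - (A.symm : E →L[ℝ] E).comp (F' (x k))‖ < 1 :=
      lt_of_le_of_lt htnorm (by linarith [hupos k])
    let Au : (E →L[ℝ] E)ˣ :=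
      ⟨A, A.symm, by ext z; simp [ContinuousLinearMap.mul_apply],
        by ext z; simp [ContinuousLinearMap.mul_apply]⟩
    let Bu : (E →L[ℝ] E)ˣ :=
      Units.oneSub ((1 : E →L[ℝ] E) - (A.symm : E →L[ℝ] E).comp (F' (x k))) htlt
    have hBuval : (Bu : E →L[ℝ] E) = (A.symm : E →L[ℝ] E).comp (F' (x k)) := sub_sub_cancel _ _
    have hFU : ((Au * Bu : (E →L[ℝ] E)ˣ) : E →L[ℝ] E) = F' (x k) := by
      rw [Units.val_mul, hBuval]
      ext z
      simp [ContinuousLinearMap.mul_apply, Au]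
    have hmul1 : (((Au * Bu)⁻¹ : (E →L[ℝ] E)ˣ) : E →L[ℝ] E) * F' (x k) = 1 := by
      rw [← hFU]; exact Units.inv_mul _
    have hmul2 : (F' (x k) : E →L[ℝ] E) * (((Au * Bu)⁻¹ : (E →L[ℝ] E)ˣ) : E →L[ℝ] E) = 1 := by
      rw [← hFU]; exact Units.mul_inv _
    have hleft : Function.LeftInverse (((Au * Bu)⁻¹ : (E →L[ℝ] E)ˣ) : E →L[ℝ] E) (F' (x k)) := by
      intro z
      conv_lhs => rw [← ContinuousLinearMap.mul_apply, hmul1]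
      exact ContinuousLinearMap.one_apply z
    have hright : Function.RightInverse (((Au * Bu)⁻¹ : (E →L[ℝ] E)ˣ) : E →L[ℝ] E) (F' (x k)) := by
      intro z
      conv_lhs => rw [← ContinuousLinearMap.mul_apply, hmul2]
      exact ContinuousLinearMap.one_apply z
    let Ak : E ≃L[ℝ] E := ContinuousLinearEquiv.equivOfInverse (F' (x k)) _ hleft hright
    have hAkcoe : (Ak : E →L[ℝ] E) = F' (x k) := rfl
    have hAksymm : ∀ z, Ak.symm z = (((Au * Bu)⁻¹ : (E →L[ℝ] E)ˣ) : E →L[ℝ] E) z := fun z => rfl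
    have hstep_eq : x (k + 1) = x k - Ak.symm (F (x k)) := by
      rw [hxs k]
      show x k - Ring.inverse (F' (x k)) (F (x k)) = x k - Ak.symm (F (x k))
      rw [← hFU, Ring.inverse_unit]
      rfl
    have hBuinv : ‖((Bu⁻¹ : (E →L[ℝ] E)ˣ) : E →L[ℝ] E)‖ ≤ (kU K η k)⁻¹ := by
      have h2' := tsum_geometric_le_of_norm_lt_one _ htlt
      have h3 : ‖(1 : E →L[ℝ] E)‖ ≤ 1 := by
        rw [ContinuousLinearMap.one_def]; exact ContinuousLinearMap.norm_id_le
      have h4 : (1 - ‖(1 : E →L[ℝ] E) - (A.symm : E →L[ℝ] E).comp (F' (x k))‖)⁻¹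
          ≤ (kU K η k)⁻¹ := by
        apply inv_anti₀ (hupos k)
        linarith
      calc ‖((Bu⁻¹ : (E →L[ℝ] E)ˣ) : E →L[ℝ] E)‖
          = ‖∑' n : ℕ, ((1 : E →L[ℝ] E) - (A.symm : E →L[ℝ] E).comp (F' (x k))) ^ n‖ := rfl
        _ ≤ _ := h2'
        _ ≤ (kU K η k)⁻¹ := by linarith
    have hxdiff : x (k + 1) - x k = -(Ak.symm (F (x k))) := by rw [hstep_eq]; abel
    have hdk : ‖x (k + 1) - x k‖ ≤ kE K η k - kE K η (k + 1) := by
      rw [hxdiff, norm_neg]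
      have h6 : ((Au * Bu)⁻¹ : (E →L[ℝ] E)ˣ) = Bu⁻¹ * Au⁻¹ := mul_inv_rev Au Bu
      have h5 : Ak.symm (F (x k))
          = ((Bu⁻¹ : (E →L[ℝ] E)ˣ) : E →L[ℝ] E) (A.symm (F (x k))) := by
        rw [hAksymm, h6, Units.val_mul, ContinuousLinearMap.mul_apply]
        rfl
      rw [h5]
      calc ‖((Bu⁻¹ : (E →L[ℝ] E)ˣ) : E →L[ℝ] E) (A.symm (F (x k)))‖
          ≤ ‖((Bu⁻¹ : (E →L[ℝ] E)ˣ) : E →L[ℝ] E)‖ * ‖A.symm (F (x k))‖ :=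
            ContinuousLinearMap.le_opNorm _ _
        _ ≤ (kU K η k)⁻¹ * (kE K η k * (kS K η + K * kE K η k / 2)) := by
            exact mul_le_mul hBuinv h2 (norm_nonneg _) (inv_nonneg.mpr (hupos k).le)
        _ = kE K η k - kE K η (k + 1) := Kantorovich.delta_eq hK hη hh k
    have h1' : ‖x (k + 1) - x₀‖ ≤ kE K η 0 - kE K η (k + 1) := by
      calc ‖x (k + 1) - x₀‖ = ‖(x (k + 1) - x k) + (x k - x₀)‖ := by rw [sub_add_sub_cancel]
        _ ≤ ‖x (k + 1) - x k‖ + ‖x k - x₀‖ := norm_add_le _ _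
        _ ≤ _ := by linarith
    have hx1D : x (k + 1) ∈ D := hmemD _ (h1'.trans (by linarith [hen (k + 1)]))
    have htay := Kantorovich.taylor_bound (D := D) hconv
      (f := fun z => A.symm (F z)) (f' := fun z => (A.symm : E →L[ℝ] E).comp (F' z))
      (fun z hz => ((A.symm : E →L[ℝ] E).hasFDerivAt).comp z (hF z hz))
      hxkD hx1D
      (fun z hz => by
        show ‖(A.symm : E →L[ℝ] E).comp (F' z) - (A.symm : E →L[ℝ] E).comp (F' (x k))‖
          ≤ K * ‖z - x k‖
        rw [← ContinuousLinearMap.comp_sub]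
        exact hLip z hz (x k) hxkD)
    have hFF : F' (x k) (x (k + 1) - x k) = -(F (x k)) := by
      rw [hxdiff, map_neg]
      rw [← hAkcoe, ContinuousLinearEquiv.coe_coe, ContinuousLinearEquiv.apply_symm_apply]
    have h7 : (fun z => A.symm (F z)) (x (k + 1)) - (fun z => A.symm (F z)) (x k)
        - ((A.symm : E →L[ℝ] E).comp (F' (x k))) (x (k + 1) - x k) = A.symm (F (x (k + 1))) := by
      simp only [ContinuousLinearMap.coe_comp', ContinuousLinearEquiv.coe_coe, Function.comp_apply, hFF, map_neg]
      abel
    rw [h7] at htay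
    have h2' : ‖A.symm (F (x (k + 1)))‖
        ≤ kE K η (k + 1) * (kS K η + K * kE K η (k + 1) / 2) := by
      calc ‖A.symm (F (x (k + 1)))‖ ≤ K / 2 * ‖x (k + 1) - x k‖ ^ 2 := htay
        _ ≤ K / 2 * (kE K η k - kE K η (k + 1)) ^ 2 := by
            apply mul_le_mul_of_nonneg_left _ (by positivity)
            exact pow_le_pow_left₀ (norm_nonneg _) hdk 2
        _ = _ := Kantorovich.quad_eq hK hη hh k
    exact ⟨⟨Ak, hAkcoe, hstep_eq⟩, hdk, h1', h2'⟩
  have Q : ∀ k, ‖x k - x₀‖ ≤ kE K η 0 - kE K η k ∧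
      ‖A.symm (F (x k))‖ ≤ kE K η k * (kS K η + K * kE K η k / 2) := by
    intro k
    induction k with
    | zero =>
      constructor
      · simp [hx0]
      · rw [Kantorovich.q0_eq hK hη hh]
        exact hstep
    | succ k ih => exact (derive k ih).2.2
  have hd : ∀ k, ‖x (k + 1) - x k‖ ≤ kE K η k - kE K η (k + 1) := fun k => (derive k (Q k)).2.1
  have hchain : ∀ k m, k ≤ m → ‖x m - x k‖ ≤ kE K η k - kE K η m := by
    intro k m hkm
    induction m, hkm using Nat.le_induction with
    | base => simp
    | succ m hkm ih =>
      calc ‖x (m + 1) - x k‖ = ‖(x (m + 1) - x m) + (x m - x k)‖ := by rw [sub_add_sub_cancel]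
        _ ≤ ‖x (m + 1) - x m‖ + ‖x m - x k‖ := norm_add_le _ _
        _ ≤ _ := by linarith [hd m, ih]
  have hgeom : ∀ N, kE K η N ≤ 2 * (2⁻¹ : ℝ) ^ N * η := by
    intro N
    calc kE K η N ≤ 2 * (2⁻¹ : ℝ) ^ N * (2 * (K * η)) ^ (2 ^ N - 1) * η :=
          Kantorovich.kE_bound hK hη hh N
      _ ≤ 2 * (2⁻¹ : ℝ) ^ N * 1 * η := by
          apply mul_le_mul_of_nonneg_right _ hη
          apply mul_le_mul_of_nonneg_left _ (by positivity)
          exact pow_le_one₀ (by positivity) (by linarith)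
      _ = 2 * (2⁻¹ : ℝ) ^ N * η := by ring
  have hE0 : Tendsto (fun N => kE K η N) atTop (nhds 0) := by
    have hg : Tendsto (fun N : ℕ => 2 * (2⁻¹ : ℝ) ^ N * η) atTop (nhds 0) := by
      have h9 := tendsto_pow_atTop_nhds_zero_of_lt_one (by norm_num : (0:ℝ) ≤ 2⁻¹)
        (by norm_num : (2⁻¹ : ℝ) < 1)
      have h10 := (h9.const_mul (2:ℝ)).mul_const η
      simpa using h10
    exact squeeze_zero hen hgeom hg
  have hcau : CauchySeq x := by
    apply cauchySeq_of_le_tendsto_0 (fun N => kE K η N) ?_ hE0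
    intro n m N hn hm
    rcases le_total n m with h | h
    · rw [dist_eq_norm, norm_sub_rev]
      exact (hchain n m h).trans (by linarith [hen m, hanti N n hn])
    · rw [dist_eq_norm]
      exact (hchain m n h).trans (by linarith [hen n, hanti N m hm])
  obtain ⟨xs, hxs_lim⟩ := cauchySeq_tendsto_of_complete hcau
  have hxs_k : ∀ k, ‖xs - x k‖ ≤ kE K η k := by
    intro k
    have h1 : Tendsto (fun m => ‖x m - x k‖) atTop (nhds ‖xs - x k‖) :=
      (hxs_lim.sub_const (x k)).norm
    apply le_of_tendsto h1
    filter_upwards [eventually_ge_atTop k] with m hm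
    exact (hchain k m hm).trans (by linarith [hen m])
  have hxsD : xs ∈ D := by
    apply hmemD
    have := hxs_k 0
    rw [hx0] at this
    exact this
  have hq0' : Tendsto (fun m => kE K η m * (kS K η + K * kE K η m / 2)) atTop (nhds 0) := by
    have h11 : Tendsto (fun m : ℕ => kE K η m * (kS K η + K * kE K η m / 2)) atTop
        (nhds (0 * (kS K η + K * 0 / 2))) :=
      hE0.mul ((tendsto_const_nhds : Tendsto (fun _ : ℕ => kS K η) atTop (nhds (kS K η))).add
        ((hE0.const_mul K).div_const 2))
    simpa using h11
  have htend1 : Tendsto (fun m => ‖A.symm (F (x m))‖) atTop (nhds ‖A.symm (F xs)‖) :=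
    ((A.symm.continuous.tendsto (F xs)).comp
      ((hF xs hxsD).continuousAt.tendsto.comp hxs_lim)).norm
  have hnorm0 : ‖A.symm (F xs)‖ ≤ 0 :=
    le_of_tendsto_of_tendsto' htend1 hq0' (fun m => (Q m).2)
  have hFxs : F xs = 0 := by
    have h8 : A.symm (F xs) = 0 := norm_le_zero_iff.mp hnorm0
    have h12 := congrArg A h8
    simpa using h12
  refine ⟨x, hx0, fun k => ⟨?_, (derive k (Q k)).1⟩, xs, hxs_lim, hFxs, ?_, ?_⟩
  · rw [Metric.mem_closedBall, dist_eq_norm, hr]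
    exact (Q k).1.trans (by linarith [hen k])
  · rw [hr]
    have := hxs_k 0
    rw [hx0] at this
    exact this
  · intro k hk1
    have hz : (2 : ℝ) ^ ((1 : ℤ) - (k : ℤ)) = 2 * (2⁻¹ : ℝ) ^ k := by
      rw [zpow_sub₀ (by norm_num : (2:ℝ) ≠ 0), zpow_one, zpow_natCast, div_eq_mul_inv, ← inv_pow]
    rw [hz]
    exact (hxs_k k).trans (Kantorovich.kE_bound hK hη hh k)
end

section
/- Suppose sup_t ‖F*(t)‖_∞ ≤ η with probability tending to one, the Jacobian F^{(1)} is Lipschitz in the sense ‖[F^{(1)}(x) - F^{(1)}(y)]v‖_∞ ≤ λ‖x-y‖_∞‖v‖_∞ with λ = 3e^{q_n}, and ‖[F^{(1)}(η*)]^{-1}F(η*)‖_∞ ≤ r with ρ := effective Lipschitz constant of the preconditioned map satisfying ρ·r = o(1). Then the Kantorovich condition h = Kη ≤ 1/2 holds eventually, and the Newton iteration starting at η* converges to a root η̂ with ‖η̂ - η*‖_∞ ≤ 2r/(1 + √(1 - 2ρr)) ≤ 4r for n large. -/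
/-- Quadratic Taylor-type bound: if the derivative of `G` grows linearly from `c`
along the segment from `c` to `x`, then `‖G x - G c‖ ≤ ρ/2 ‖x - c‖²`. -/
lemma quad_bound {E : Type*} [NormedAddCommGroup E] [NormedSpace ℝ E]
    (G : E → E) (G' : E → E →L[ℝ] E) (hG : ∀ x, HasFDerivAt G (G' x) x)
    (c x : E) (ρ : ℝ)
    (hb : ∀ u ∈ Set.Icc (0:ℝ) 1, ‖G' (c + u • (x - c))‖ ≤ ρ * (u * ‖x - c‖)) :
    ‖G x - G c‖ ≤ ρ / 2 * ‖x - c‖ ^ 2 := by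
  set p : ℝ → E := fun u => c + u • (x - c) with hp
  set f : ℝ → E := fun u => G (p u) - G c with hf
  set f' : ℝ → E := fun u => (G' (p u)) (x - c) with hf'
  set B : ℝ → ℝ := fun u => ρ / 2 * ‖x - c‖ ^ 2 * u ^ 2 with hB
  set B' : ℝ → ℝ := fun u => ρ / 2 * ‖x - c‖ ^ 2 * (2 * u) with hB'
  have hpd : ∀ u : ℝ, HasDerivAt p (x - c) u := by
    intro u
    simpa [hp] using ((hasDerivAt_id u).smul_const (x - c)).const_add c
  have hfd : ∀ u : ℝ, HasDerivAt f (f' u) u := by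
    intro u
    exact (((hG (p u)).comp_hasDerivAt u (hpd u)).sub_const (G c))
  have hBd : ∀ u : ℝ, HasDerivAt B (B' u) u := by
    intro u
    simpa [hB, hB'] using (hasDerivAt_pow 2 u).const_mul (ρ / 2 * ‖x - c‖ ^ 2)
  have key : ∀ ⦃u⦄, u ∈ Set.Icc (0:ℝ) 1 → ‖f u‖ ≤ B u := by
    apply image_norm_le_of_norm_deriv_right_le_deriv_boundary
      (f' := f') (B := B) (B' := B')
    · exact fun u _ => (hfd u).continuousAt.continuousWithinAt
    · exact fun u hu => (hfd u).hasDerivWithinAt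
    · simp [hf, hp, hB]
    · exact hBd
    · intro u hu
      have hu' : u ∈ Set.Icc (0:ℝ) 1 := ⟨hu.1, hu.2.le⟩
      calc ‖f' u‖ ≤ ‖G' (p u)‖ * ‖x - c‖ := (G' (p u)).le_opNorm _
        _ ≤ ρ * (u * ‖x - c‖) * ‖x - c‖ :=
            mul_le_mul_of_nonneg_right (hb u hu') (norm_nonneg _)
        _ = B' u := by ring
  have h1 := key (u := 1) ⟨zero_le_one, le_refl 1⟩
  simpa [hf, hp, hB] using h1

/-- Packaged application of the Kantorovich theorem in Lemma 6: if the preconditioned first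
Newton step is bounded by `r` and the preconditioned Jacobian is `ρ`-Lipschitz with `ρ r ≤ 3/8`,
then the Kantorovich condition `h ≤ 1/2` holds and a root `η̂` of `F` exists with
`‖η̂ - η*‖ ≤ 2r/(1+√(1-2ρr)) ≤ 4r`. -/
theorem kantorovich_root_bound {E : Type*} [NormedAddCommGroup E] [NormedSpace ℝ E]
    [CompleteSpace E]
    (F : E → E) (F' : E → E →L[ℝ] E)
    (hF : ∀ x, HasFDerivAt F (F' x) x)
    (ηs : E) (A : E ≃L[ℝ] E) (hA : (A : E →L[ℝ] E) = F' ηs)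
    (ρ r : ℝ) (hρ : 0 ≤ ρ) (hr : 0 ≤ r)
    (hLip : ∀ x y : E, ‖(A.symm : E →L[ℝ] E).comp (F' x - F' y)‖ ≤ ρ * ‖x - y‖)
    (hstep : ‖A.symm (F ηs)‖ ≤ r)
    (hsmall : ρ * r ≤ 3 / 8) :
    ρ * r ≤ 1 / 2 ∧
    ∃ ηhat : E, F ηhat = 0 ∧
      ‖ηhat - ηs‖ ≤ 2 * r / (1 + Real.sqrt (1 - 2 * (ρ * r))) ∧
      2 * r / (1 + Real.sqrt (1 - 2 * (ρ * r))) ≤ 4 * r := by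
  set s : ℝ := Real.sqrt (1 - 2 * (ρ * r)) with hsdef
  have hρr : 0 ≤ ρ * r := mul_nonneg hρ hr
  have h14 : (1:ℝ)/4 ≤ 1 - 2 * (ρ * r) := by linarith
  have hs_half : (1:ℝ)/2 ≤ s := by
    have : Real.sqrt (1/4) ≤ s := Real.sqrt_le_sqrt h14
    rwa [show (1/4:ℝ) = (1/2)^2 by norm_num, Real.sqrt_sq (by norm_num : (0:ℝ) ≤ 1/2)] at this
  have hs1 : s ≤ 1 := Real.sqrt_le_one.mpr (by linarith)
  have hs_sq : s ^ 2 = 1 - 2 * (ρ * r) := Real.sq_sqrt (by linarith)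
  have hs_pos : (0:ℝ) < 1 + s := by linarith
  set t : ℝ := 2 * r / (1 + s) with htdef
  have ht_eq : t * (1 + s) = 2 * r := div_mul_cancel₀ _ (ne_of_gt hs_pos)
  have ht0 : 0 ≤ t := div_nonneg (by linarith) hs_pos.le
  have hρt : ρ * t = 1 - s := by nlinarith [ht_eq, hs_sq]
  have hρt_half : ρ * t ≤ 1/2 := by rw [hρt]; linarith
  have hkey : r + ρ / 2 * t ^ 2 = t := by nlinarith [ht_eq, hρt]
  have ht4r : t ≤ 4 * r := by
    rw [htdef, div_le_iff₀ hs_pos]; nlinarith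
  refine ⟨by linarith, ?_⟩
  -- the simplified Newton map
  set G : E → E := fun x => x - A.symm (F x) with hGdef
  set G' : E → E →L[ℝ] E := fun x =>
    ContinuousLinearMap.id ℝ E - (A.symm : E →L[ℝ] E).comp (F' x) with hG'def
  have hGd : ∀ x, HasFDerivAt G (G' x) x := fun x =>
    (hasFDerivAt_id x).sub ((A.symm : E →L[ℝ] E).hasFDerivAt.comp x (hF x))
  have hG'eq : ∀ z, G' z = (A.symm : E →L[ℝ] E).comp (F' ηs - F' z) := by
    intro z
    ext v
    simp [hG'def, ContinuousLinearMap.comp_apply, ContinuousLinearMap.sub_apply, map_sub, ← hA]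
  have hG'norm : ∀ z : E, ‖G' z‖ ≤ ρ * ‖z - ηs‖ := by
    intro z
    rw [hG'eq z, norm_sub_rev z ηs]
    exact hLip ηs z
  set S : Set E := Metric.closedBall ηs t with hSdef
  have hηsS : ηs ∈ S := Metric.mem_closedBall_self ht0
  have hGηs : ‖G ηs - ηs‖ ≤ r := by
    simpa [hGdef] using hstep
  -- quadratic estimate from the center
  have hquad : ∀ x : E, ‖G x - G ηs‖ ≤ ρ / 2 * ‖x - ηs‖ ^ 2 := by
    intro x
    apply quad_bound G G' hGd ηs x ρ
    intro u hu
    have h1 : ‖(ηs + u • (x - ηs)) - ηs‖ = u * ‖x - ηs‖ := by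
      simp [norm_smul, abs_of_nonneg hu.1]
    calc ‖G' (ηs + u • (x - ηs))‖ ≤ ρ * ‖(ηs + u • (x - ηs)) - ηs‖ := hG'norm _
      _ = ρ * (u * ‖x - ηs‖) := by rw [h1]
  -- invariance of the ball
  have hinv : ∀ x ∈ S, G x ∈ S := by
    intro x hx
    rw [hSdef, Metric.mem_closedBall, dist_eq_norm]
    have hxd : ‖x - ηs‖ ≤ t := by
      rw [← dist_eq_norm]; exact hx
    calc ‖G x - ηs‖ ≤ ‖G x - G ηs‖ + ‖G ηs - ηs‖ := norm_sub_le_norm_sub_add_norm_sub _ _ _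
      _ ≤ ρ / 2 * ‖x - ηs‖ ^ 2 + r := add_le_add (hquad x) hGηs
      _ ≤ ρ / 2 * t ^ 2 + r := by
          have : ‖x - ηs‖ ^ 2 ≤ t ^ 2 := by nlinarith [norm_nonneg (x - ηs)]
          nlinarith
      _ = t := by linarith [hkey]
  -- Lipschitz bound on the ball
  have hGlip : ∀ x ∈ S, ∀ y ∈ S, ‖G x - G y‖ ≤ 1/2 * ‖x - y‖ := by
    intro x hx y hy
    have := (convex_closedBall ηs t).norm_image_sub_le_of_norm_hasFDerivWithin_le
      (f := G) (f' := G') (C := 1/2) (fun z hz => (hGd z).hasFDerivWithinAt)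
      (fun z hz => by
        have hzd : ‖z - ηs‖ ≤ t := by rw [← dist_eq_norm]; exact hz
        calc ‖G' z‖ ≤ ρ * ‖z - ηs‖ := hG'norm z
          _ ≤ ρ * t := mul_le_mul_of_nonneg_left hzd hρ
          _ ≤ 1/2 := hρt_half) hy hx
    exact this
  -- Banach fixed point on the closed ball
  haveI : Nonempty S := ⟨⟨ηs, hηsS⟩⟩
  haveI : CompleteSpace S := (Metric.isClosed_closedBall (x := ηs) (ε := t)).completeSpace_coe
  set g : S → S := fun x => ⟨G x, hinv x x.2⟩ with hgdef
  have hglip : LipschitzWith ((1:NNReal)/2) g := by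
    apply LipschitzWith.of_dist_le_mul
    intro x y
    simp only [Subtype.dist_eq, dist_eq_norm]
    calc ‖G (x:E) - G (y:E)‖ ≤ 1/2 * ‖(x:E) - (y:E)‖ := hGlip x x.2 y y.2
      _ = (((1:NNReal)/2 : NNReal) : ℝ) * ‖(x:E) - (y:E)‖ := by push_cast; norm_num
  have hcontr : ContractingWith ((1:NNReal)/2) g := by
    refine ⟨?_, hglip⟩
    rw [show ((1:NNReal)/2) = (2⁻¹ : NNReal) by norm_num, ← NNReal.coe_lt_coe]
    push_cast
    norm_num
  set fp : S := hcontr.fixedPoint g with hfpdef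
  have hfix : g fp = fp := hcontr.fixedPoint_isFixedPt
  have hfixE : G (fp : E) = (fp : E) := congrArg Subtype.val hfix
  have hFzero : F (fp : E) = 0 := by
    have h0 : A.symm (F (fp : E)) = 0 := by
      have := hfixE
      simp only [hGdef] at this
      have := sub_eq_self.mp this
      exact this
    have := congrArg A h0
    simpa using this
  exact ⟨(fp : E), hFzero, mem_closedBall_iff_norm.mp fp.2, ht4r⟩
end
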